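/- arXiv:2306.02645 — 13 statements merged into one kernel-verified Lean document; each statement's English description precedes it below -/
import Mathlib

section
/- The natural inclusion G : ℓ₁ → c₀ is a generating operator: for every δ ∈ (0,1), the closed convex hull (in ℓ₁) of {x ∈ B_{ℓ₁} : ‖Gx‖_∞ > 1−δ} equals the closed unit ball of ℓ₁. -/
open Metric Set

private lemma aux_subconvex {X : Type*} [AddCommGroup X] [Module ℝ X] {C : Set X}
    (hC : Convex ℝ C) (h0 : (0:X) ∈ C) {ι : Type*} (s : Finset ι) (w : ι → ℝ) (p : ι → X)
    (hw : ∀ i ∈ s, 0 ≤ w i) (hws : (∑ i ∈ s, w i) ≤ 1) (hp : ∀ i ∈ s, p i ∈ C) :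
    (∑ i ∈ s, w i • p i) ∈ C := by
  set t := ∑ i ∈ s, w i with ht
  rcases eq_or_lt_of_le (Finset.sum_nonneg hw) with h | h
  · have hz : ∀ i ∈ s, w i = 0 := by
      intro i hi
      exact (Finset.sum_eq_zero_iff_of_nonneg hw).mp h.symm i hi
    have : (∑ i ∈ s, w i • p i) = 0 := by
      apply Finset.sum_eq_zero
      intro i hi; rw [hz i hi, zero_smul]
    rw [this]; exact h0
  · have hz : (∑ i ∈ s, (w i / t) • p i) ∈ C := by
      apply hC.sum_mem
      · intro i hi; exact div_nonneg (hw i hi) h.le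
      · rw [← Finset.sum_div]; exact div_self h.ne'
      · exact hp
    have key : (∑ i ∈ s, w i • p i) = t • (∑ i ∈ s, (w i / t) • p i) + (1 - t) • 0 := by
      rw [smul_zero, add_zero, Finset.smul_sum]
      refine Finset.sum_congr rfl fun i hi => ?_
      rw [smul_smul, mul_div_cancel₀ _ h.ne']
    rw [key]
    exact hC hz h0 h.le (by linarith) (by ring)

theorem stmt3 :
    ∀ δ ∈ Set.Ioo (0:ℝ) 1,
      closure (convexHull ℝ
          {x : lp (fun _ : ℕ => ℝ) 1 | ‖x‖ ≤ 1 ∧ 1 - δ < ⨆ n : ℕ, |(x : ∀ _ : ℕ, ℝ) n|})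
        = Metric.closedBall (0 : lp (fun _ : ℕ => ℝ) 1) 1 := by
  intro δ hδ
  obtain ⟨hδ0, hδ1⟩ := hδ
  set S : Set (lp (fun _ : ℕ => ℝ) 1) :=
    {x : lp (fun _ : ℕ => ℝ) 1 | ‖x‖ ≤ 1 ∧ 1 - δ < ⨆ n : ℕ, |(x : ∀ _ : ℕ, ℝ) n|} with hS
  have hp1 : (0:ℝ) < (1 : ENNReal).toReal := by norm_num
  -- the basis vectors (with sign) belong to S
  have hmem : ∀ (n : ℕ) (c : ℝ), |c| = 1 → lp.single 1 n c ∈ S := by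
    intro n c hc
    have hnorm : ‖(lp.single 1 n c : lp (fun _ : ℕ => ℝ) 1)‖ = 1 := by
      have := lp.norm_single (E := fun _ : ℕ => ℝ) (by norm_num : (0:ENNReal) < 1) n c
      simpa [Real.norm_eq_abs, hc] using this
    constructor
    · exact hnorm.le
    · have hbdd : BddAbove (Set.range fun m : ℕ =>
          |((lp.single 1 n c : lp (fun _ : ℕ => ℝ) 1) : ∀ _ : ℕ, ℝ) m|) := by
        refine ⟨1, ?_⟩
        rintro _ ⟨m, rfl⟩
        have := lp.norm_apply_le_norm (E := fun _ : ℕ => ℝ) (p := 1) one_ne_zero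
          (lp.single 1 n c) m
        simpa [Real.norm_eq_abs, hnorm] using this
      have hle : (1:ℝ) ≤ ⨆ m : ℕ,
          |((lp.single 1 n c : lp (fun _ : ℕ => ℝ) 1) : ∀ _ : ℕ, ℝ) m| := by
        have h1 : |((lp.single 1 n c : lp (fun _ : ℕ => ℝ) 1) : ∀ _ : ℕ, ℝ) n| = 1 := by
          rw [lp.single_apply_self]; exact hc
        calc (1:ℝ) = _ := h1.symm
          _ ≤ _ := le_ciSup hbdd n
      linarith
  apply le_antisymm
  · -- closure (hull S) ⊆ closed ball
    refine closure_minimal ?_ Metric.isClosed_closedBall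
    refine convexHull_min ?_ (convex_closedBall _ _)
    intro x hx
    rw [mem_closedBall_zero_iff]
    exact hx.1
  · -- closed ball ⊆ closure (hull S)
    intro x hx
    rw [mem_closedBall_zero_iff] at hx
    have hC : Convex ℝ (convexHull ℝ S) := convex_convexHull ℝ S
    have h0 : (0 : lp (fun _ : ℕ => ℝ) 1) ∈ convexHull ℝ S := by
      have hv : (lp.single 1 0 (1:ℝ) : lp (fun _ : ℕ => ℝ) 1) ∈ convexHull ℝ S :=
        subset_convexHull ℝ S (hmem 0 1 (by norm_num))
      have hw : (lp.single 1 0 (-1:ℝ) : lp (fun _ : ℕ => ℝ) 1) ∈ convexHull ℝ S :=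
        subset_convexHull ℝ S (hmem 0 (-1) (by norm_num))
      have := hC hv hw (by norm_num : (0:ℝ) ≤ 1/2) (by norm_num : (0:ℝ) ≤ 1/2) (by norm_num)
      have heq : (1/2 : ℝ) • (lp.single 1 0 (1:ℝ) : lp (fun _ : ℕ => ℝ) 1)
          + (1/2 : ℝ) • (lp.single 1 0 (-1:ℝ) : lp (fun _ : ℕ => ℝ) 1) = 0 := by
        rw [show ((-1:ℝ)) = -(1:ℝ) from rfl, lp.single_neg, smul_neg]
        abel
      rwa [heq] at this
    -- partial sums lie in the convex hull
    have hpartial : ∀ s : Finset ℕ,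
        (∑ i ∈ s, lp.single 1 i ((x : ∀ _ : ℕ, ℝ) i)) ∈ convexHull ℝ S := by
      intro s
      have hdecomp : (∑ i ∈ s, lp.single 1 i ((x : ∀ _ : ℕ, ℝ) i))
          = ∑ i ∈ s, |(x : ∀ _ : ℕ, ℝ) i| •
              (lp.single 1 i (if 0 ≤ (x : ∀ _ : ℕ, ℝ) i then (1:ℝ) else -1) :
                lp (fun _ : ℕ => ℝ) 1) := by
        refine Finset.sum_congr rfl fun i _ => ?_
        rw [← lp.single_smul]
        congr 1
        by_cases h : 0 ≤ (x : ∀ _ : ℕ, ℝ) i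
        · simp [h, abs_of_nonneg h]
        · simp only [h, if_false]
          rw [abs_of_neg (lt_of_not_ge h)]
          simp
      rw [hdecomp]
      apply aux_subconvex hC h0
      · intro i _; exact abs_nonneg _
      · have := lp.sum_rpow_le_norm_rpow (E := fun _ : ℕ => ℝ) hp1 x s
        simp only [ENNReal.toReal_one, Real.rpow_one, Real.norm_eq_abs] at this
        linarith
      · intro i _
        apply subset_convexHull ℝ S
        apply hmem
        by_cases h : 0 ≤ (x : ∀ _ : ℕ, ℝ) i <;> simp [h]
    have hsum : HasSum (fun i : ℕ => lp.single 1 i ((x : ∀ _ : ℕ, ℝ) i)) x :=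
      lp.hasSum_single (by norm_num) x
    exact mem_closure_of_tendsto hsum (Filter.Eventually.of_forall hpartial)
end

section
/- Let X be a reflexive Banach space, Y a Banach space, and G : X → Y a compact operator with ‖G‖ = 1. Then ⋂_{δ>0} closedConvexHull(att(G,δ)) = closedConvexHull(att(G)), where att(G,δ) = {x ∈ B_X : ‖Gx‖ > 1−δ} and att(G) = {x ∈ S_X : ‖Gx‖ = 1}. -/
open Metric Set

set_option maxHeartbeats 1000000 in
theorem stmt4 {X Y : Type*} [NormedAddCommGroup X] [NormedSpace ℝ X] [CompleteSpace X]
    [NormedAddCommGroup Y] [NormedSpace ℝ Y] [CompleteSpace Y]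
    (hrefl : Function.Surjective (NormedSpace.inclusionInDoubleDual ℝ X))
    (G : X →L[ℝ] Y) (hG : ‖G‖ = 1) (hcomp : IsCompactOperator G) :
    (⋂ δ ∈ Set.Ioi (0:ℝ), closure (convexHull ℝ {x : X | ‖x‖ ≤ 1 ∧ 1 - δ < ‖G x‖}))
      = closure (convexHull ℝ {x : X | ‖x‖ = 1 ∧ ‖G x‖ = 1}) := by
  classical
  apply Set.Subset.antisymm
  · -- hard direction
    intro x hx
    simp only [Set.mem_iInter, Set.mem_Ioi] at hx
    by_contra hxD
    obtain ⟨f, u, hfD, hfx⟩ :=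
      geometric_hahn_banach_closed_point
        (s := closure (convexHull ℝ {x : X | ‖x‖ = 1 ∧ ‖G x‖ = 1}))
        ((convex_convexHull ℝ _).closure) isClosed_closure hxD
    set S : ℝ → Set X := fun δ => {z : X | ‖z‖ ≤ 1 ∧ 1 - δ ≤ ‖G z‖ ∧ u ≤ f z} with hSdef
    have hfconv : ConvexOn ℝ (Set.univ : Set X) f := by
      refine ⟨convex_univ, fun a _ b _ p q _ _ _ => le_of_eq ?_⟩
      simp [map_add, map_smul, smul_eq_mul]
    have hSne : ∀ δ : ℝ, 0 < δ → (S δ).Nonempty := by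
      intro δ hδ
      have hxc := hx δ hδ
      obtain ⟨z, hz1, hz2⟩ := mem_closure_iff.mp hxc {w : X | u < f w}
        (isOpen_lt continuous_const f.continuous) hfx
      obtain ⟨y, hy, hfy⟩ := hfconv.exists_ge_of_mem_convexHull (Set.subset_univ _) hz2
      exact ⟨y, hy.1, hy.2.le, le_trans (le_of_lt hz1) hfy⟩
    have hSmono : ∀ {δ δ' : ℝ}, δ ≤ δ' → S δ ⊆ S δ' := by
      intro δ δ' h z hz
      exact ⟨hz.1, le_trans (by linarith) hz.2.1, hz.2.2⟩
    set Jw : X → WeakDual ℝ (StrongDual ℝ X) :=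
      fun z => StrongDual.toWeakDual (NormedSpace.inclusionInDoubleDual ℝ X z) with hJwdef
    set T : ℕ → Set (WeakDual ℝ (StrongDual ℝ X)) :=
      fun n => closure (Jw '' S (1 / ((n : ℝ) + 1))) with hTdef
    have hpos : ∀ n : ℕ, (0:ℝ) < 1 / ((n : ℝ) + 1) := fun n => by positivity
    have hTanti : Antitone T := by
      intro m n hmn
      apply closure_mono
      apply Set.image_mono
      apply hSmono
      have h1 : (m:ℝ) + 1 ≤ (n:ℝ) + 1 := by exact_mod_cast Nat.succ_le_succ hmn
      exact one_div_le_one_div_of_le (by positivity) h1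
    have hTsubB : ∀ n, T n ⊆ WeakDual.toStrongDual ⁻¹' Metric.closedBall 0 1 := by
      intro n
      apply closure_minimal ?_ (WeakDual.isClosed_closedBall 0 1)
      rintro _ ⟨z, hz, rfl⟩
      simp only [Set.mem_preimage, Metric.mem_closedBall, dist_zero_right]
      have h1 : WeakDual.toStrongDual (Jw z) = NormedSpace.inclusionInDoubleDual ℝ X z := rfl
      rw [h1]
      exact le_trans (NormedSpace.double_dual_bound ℝ X z) hz.1
    have hTne : ∀ n, (T n).Nonempty := fun n =>
      ((hSne _ (hpos n)).image Jw).closure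
    have hTclosed : ∀ n, IsClosed (T n) := fun _ => isClosed_closure
    have hTcomp : ∀ n, IsCompact (T n) := fun n =>
      (WeakDual.isCompact_closedBall (𝕜 := ℝ) (E := StrongDual ℝ X) 0 1).of_isClosed_subset (hTclosed n) (hTsubB n)
    obtain ⟨ξ, hξ⟩ := IsCompact.nonempty_iInter_of_directed_nonempty_isCompact_isClosed T
      hTanti.directed_ge hTne hTcomp hTclosed
    simp only [Set.mem_iInter] at hξ
    obtain ⟨w, hw⟩ := hrefl (WeakDual.toStrongDual ξ)
    have key : ∀ (n : ℕ) (C : Set (WeakDual ℝ (StrongDual ℝ X))), IsClosed C →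
        (∀ z ∈ S (1 / ((n : ℝ) + 1)), Jw z ∈ C) → ξ ∈ C := by
      intro n C hC h
      exact closure_minimal (by rintro _ ⟨z, hz, rfl⟩; exact h z hz) hC (hξ n)
    have happ : ∀ φ : StrongDual ℝ X, ξ φ = φ w := by
      intro φ
      have h1 : ξ φ = WeakDual.toStrongDual ξ φ := rfl
      rw [h1, ← hw]
      exact NormedSpace.dual_def ℝ X w φ
    have hJwapp : ∀ (z : X) (φ : StrongDual ℝ X), Jw z φ = φ z := fun z φ => rfl
    -- u ≤ f w
    have hufw : u ≤ f w := by
      have h := key 0 {η | u ≤ η f}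
        (isClosed_le continuous_const (WeakDual.eval_continuous f))
        (fun z hz => by rw [Set.mem_setOf_eq, hJwapp]; exact hz.2.2)
      rw [Set.mem_setOf_eq, happ] at h
      exact h
    -- 1 ≤ ‖G w‖
    have hGw1 : (1:ℝ) ≤ ‖G w‖ := by
      have main : ∀ ε : ℝ, 0 < ε → ∀ n : ℕ, 1 - 1 / ((n : ℝ) + 1) - 2 * ε ≤ ‖G w‖ := by
        intro ε hε n
        have hK : IsCompact (closure (G '' Metric.closedBall 0 1)) :=
          hcomp.isCompact_closure_image_closedBall 1
        have hcover : closure (G '' Metric.closedBall 0 1) ⊆ ⋃ y : Y, Metric.ball y ε :=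
          fun p _ => Set.mem_iUnion.mpr ⟨p, Metric.mem_ball_self hε⟩
        obtain ⟨t, ht⟩ := hK.elim_finite_subcover (fun y : Y => Metric.ball y ε)
          (fun _ => Metric.isOpen_ball) hcover
        have hgex : ∀ y : Y, ∃ gy : Y →L[ℝ] ℝ, ‖gy‖ ≤ 1 ∧ gy y = ‖y‖ := by
          intro y
          by_cases hy : y = 0
          · exact ⟨0, by simp, by simp [hy]⟩
          · obtain ⟨gy, h1, h2⟩ := exists_dual_vector ℝ y (norm_ne_zero_iff.mpr hy)
            exact ⟨gy, le_of_eq h1, by exact_mod_cast h2⟩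
        choose g hg1 hg2 using hgex
        set C : Set (WeakDual ℝ (StrongDual ℝ X)) :=
          ⋃ y ∈ t, {η : WeakDual ℝ (StrongDual ℝ X) |
            1 - 1 / ((n : ℝ) + 1) - 2 * ε ≤ η ((g y).comp G)} with hCdef
        have hCclosed : IsClosed C := by
          apply Set.Finite.isClosed_biUnion t.finite_toSet
          intro y _
          exact isClosed_le continuous_const (WeakDual.eval_continuous _)
        have hmem : ξ ∈ C := by
          apply key n C hCclosed
          intro z hz
          have hzK : G z ∈ closure (G '' Metric.closedBall 0 1) :=
            subset_closure ⟨z, mem_closedBall_zero_iff.mpr hz.1, rfl⟩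
          obtain ⟨y, hyt, hy⟩ := Set.mem_iUnion₂.mp (ht hzK)
          apply Set.mem_biUnion hyt
          rw [Set.mem_setOf_eq]
          have h1 : Jw z ((g y).comp G) = g y (G z) := rfl
          rw [h1]
          have hd : ‖G z - y‖ < ε := by
            rw [← dist_eq_norm]; exact Metric.mem_ball.mp hy
          have h2 : ‖G z‖ - ε ≤ ‖y‖ := by
            have h := norm_sub_norm_le (G z) y
            linarith
          have h3 : |g y (G z - y)| ≤ ε := by
            calc |g y (G z - y)| ≤ ‖g y‖ * ‖G z - y‖ := (g y).le_opNorm _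
              _ ≤ 1 * ε := mul_le_mul (hg1 y) hd.le (norm_nonneg _) zero_le_one
              _ = ε := one_mul ε
          have h4 : g y (G z) = ‖y‖ + g y (G z - y) := by
            rw [map_sub, hg2 y]; ring
          have h5 : 1 - 1 / ((n : ℝ) + 1) ≤ ‖G z‖ := hz.2.1
          have h6 := abs_le.mp h3
          linarith [h6.1]
        obtain ⟨y, hyt, hy⟩ := Set.mem_iUnion₂.mp hmem
        rw [Set.mem_setOf_eq, happ] at hy
        have h7 : ((g y).comp G) w ≤ ‖G w‖ := by
          calc ((g y).comp G) w = g y (G w) := rfl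
            _ ≤ |g y (G w)| := le_abs_self _
            _ ≤ ‖g y‖ * ‖G w‖ := (g y).le_opNorm _
            _ ≤ 1 * ‖G w‖ := mul_le_mul_of_nonneg_right (hg1 y) (norm_nonneg _)
            _ = ‖G w‖ := one_mul _
        linarith
      by_contra hlt
      push_neg at hlt
      set η := 1 - ‖G w‖ with hηdef
      have hηpos : 0 < η := by simp only [hηdef]; linarith
      obtain ⟨n, hn⟩ := exists_nat_gt (2 / η)
      have hn' : 2 / η < (n:ℝ) + 1 := by linarith
      have h1 : 1 / ((n:ℝ) + 1) < η / 2 := by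
        have h0 := one_div_lt_one_div_of_lt (by positivity : (0:ℝ) < 2 / η) hn'
        rwa [one_div_div] at h0
      have h3 := main (η / 4) (by positivity) n
      simp only [hηdef] at h1 h3
      linarith
    -- ‖w‖ ≤ 1
    have hwle : ‖w‖ ≤ 1 := by
      have hξB := hTsubB 0 (hξ 0)
      simp only [Set.mem_preimage, Metric.mem_closedBall, dist_zero_right] at hξB
      apply NormedSpace.norm_le_dual_bound ℝ w zero_le_one
      intro φ
      have h1 : φ w = WeakDual.toStrongDual ξ φ := by
        rw [← hw]; exact (NormedSpace.dual_def ℝ X w φ).symm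
      rw [h1, one_mul]
      calc ‖WeakDual.toStrongDual ξ φ‖ ≤ ‖WeakDual.toStrongDual ξ‖ * ‖φ‖ :=
            (WeakDual.toStrongDual ξ).le_opNorm φ
        _ ≤ 1 * ‖φ‖ := mul_le_mul_of_nonneg_right ((dist_zero_right (WeakDual.toStrongDual ξ)).symm.trans_le hξB) (norm_nonneg _)
        _ = ‖φ‖ := one_mul _
    have hGwle : ‖G w‖ ≤ 1 := by
      calc ‖G w‖ ≤ ‖G‖ * ‖w‖ := G.le_opNorm w
        _ = ‖w‖ := by rw [hG, one_mul]
        _ ≤ 1 := hwle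
    have hGweq : ‖G w‖ = 1 := le_antisymm hGwle hGw1
    have hweq : ‖w‖ = 1 := by
      apply le_antisymm hwle
      calc (1:ℝ) = ‖G w‖ := hGweq.symm
        _ ≤ ‖G‖ * ‖w‖ := G.le_opNorm w
        _ = ‖w‖ := by rw [hG, one_mul]
    have hwD : w ∈ closure (convexHull ℝ {x : X | ‖x‖ = 1 ∧ ‖G x‖ = 1}) :=
      subset_closure (subset_convexHull ℝ _ ⟨hweq, hGweq⟩)
    exact absurd (hfD w hwD) (not_lt.mpr hufw)
  · -- easy direction
    intro x hx
    simp only [Set.mem_iInter, Set.mem_Ioi]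
    intro δ hδ
    refine closure_mono (convexHull_mono ?_) hx
    rintro z ⟨hz1, hz2⟩
    exact ⟨hz1.le, by rw [hz2]; linarith⟩
end

section
/- Let X, Y be Banach spaces and G : X → Y a generating operator. If x₀ is a denting point of B_X, then ‖Gx₀‖ = 1. -/
open Metric Set

theorem stmt6 {X Y : Type*} [NormedAddCommGroup X] [NormedSpace ℝ X] [CompleteSpace X]
    [NormedAddCommGroup Y] [NormedSpace ℝ Y] [CompleteSpace Y]
    (G : X →L[ℝ] Y) (hG : ‖G‖ = 1)
    (hgen : ∀ δ > (0:ℝ),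
      closure (convexHull ℝ {x : X | ‖x‖ ≤ 1 ∧ 1 - δ < ‖G x‖}) = Metric.closedBall (0:X) 1)
    (x₀ : X) (hx₀ : ‖x₀‖ ≤ 1)
    (hdent : ∀ r > (0:ℝ),
      x₀ ∉ closure (convexHull ℝ (Metric.closedBall (0:X) 1 \ Metric.ball x₀ r))) :
    ‖G x₀‖ = 1 := by
  have hle : ‖G x₀‖ ≤ 1 := by
    calc ‖G x₀‖ ≤ ‖G‖ * ‖x₀‖ := G.le_opNorm x₀
    _ ≤ 1 := by rw [hG]; simpa using hx₀
  by_contra hne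
  have hlt : ‖G x₀‖ < 1 := lt_of_le_of_ne hle hne
  set ε := 1 - ‖G x₀‖ with hε
  have hεpos : 0 < ε := by simp [hε]; linarith
  have hsub : {x : X | ‖x‖ ≤ 1 ∧ 1 - ε/2 < ‖G x‖} ⊆
      Metric.closedBall (0:X) 1 \ Metric.ball x₀ (ε/2) := by
    rintro x ⟨hx1, hx2⟩
    refine ⟨by simpa using hx1, ?_⟩
    simp only [Metric.mem_ball, dist_eq_norm, not_lt]
    have h1 : ‖G x - G x₀‖ ≥ ‖G x‖ - ‖G x₀‖ := norm_sub_norm_le _ _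
    have h2 : ‖G x - G x₀‖ ≤ ‖x - x₀‖ := by
      have := G.le_opNorm (x - x₀)
      rw [hG, one_mul] at this
      simpa using this
    have : ε/2 < ‖G x‖ - ‖G x₀‖ := by linarith
    linarith
  have hmono := closure_mono (convexHull_mono (𝕜 := ℝ) hsub)
  rw [hgen (ε/2) (by linarith)] at hmono
  exact hdent (ε/2) (by linarith) (hmono (by simpa using hx₀))
end

section
/- Let X, Y be Banach spaces and G : X → Y a generating operator. If x₀ ∈ S_X is a point of sliced fragmentability (for every δ > 0 there is a slice S_δ of B_X with S_δ ⊆ x₀ + δ·B_X), then ‖Gx₀‖ = 1. -/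
open Metric Set

theorem stmt7 {X Y : Type*} [NormedAddCommGroup X] [NormedSpace ℝ X] [CompleteSpace X]
    [NormedAddCommGroup Y] [NormedSpace ℝ Y] [CompleteSpace Y]
    (G : X →L[ℝ] Y) (hG : ‖G‖ = 1)
    (hgen : ∀ δ > (0:ℝ),
      closure (convexHull ℝ {x : X | ‖x‖ ≤ 1 ∧ 1 - δ < ‖G x‖}) = Metric.closedBall (0:X) 1)
    (x₀ : X) (hx₀ : ‖x₀‖ = 1)
    (hfrag : ∀ δ > (0:ℝ), ∃ (f : X →L[ℝ] ℝ) (α : ℝ), 0 < α ∧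
      {x : X | ‖x‖ ≤ 1 ∧ sSup ((fun y => f y) '' Metric.closedBall (0:X) 1) - α < f x}
        ⊆ {x : X | ‖x - x₀‖ ≤ δ}) :
    ‖G x₀‖ = 1 := by
  have hub : ‖G x₀‖ ≤ 1 := by
    calc ‖G x₀‖ ≤ ‖G‖ * ‖x₀‖ := G.le_opNorm x₀
    _ = 1 := by rw [hG, hx₀]; ring
  have hlb : ∀ δ > (0:ℝ), 1 - 2 * δ ≤ ‖G x₀‖ := by
    intro δ hδ
    obtain ⟨f, α, hα, hsub⟩ := hfrag δ hδ
    set M := sSup ((fun y => f y) '' Metric.closedBall (0:X) 1) with hM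
    set A := {x : X | ‖x‖ ≤ 1 ∧ 1 - δ < ‖G x‖} with hA
    -- A meets the slice
    have hmeet : ∃ x ∈ A, M - α < f x := by
      by_contra h
      push_neg at h
      have hconv : closure (convexHull ℝ A) ⊆ {x : X | f x ≤ M - α} := by
        apply closure_minimal
        · apply convexHull_min h
          exact (convex_Iic (M - α)).linear_preimage f.toLinearMap
        · exact IsClosed.preimage f.continuous isClosed_Iic
      rw [hgen δ hδ] at hconv
      have hMle : M ≤ M - α := by
        apply csSup_le
        · exact ⟨f 0, mem_image_of_mem _ (by simp)⟩
        · rintro b ⟨x, hx, rfl⟩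
          exact hconv hx
      linarith
    obtain ⟨x, hxA, hxf⟩ := hmeet
    have hclose : ‖x - x₀‖ ≤ δ := hsub ⟨hxA.1, hxf⟩
    have h1 : ‖G x - G x₀‖ ≤ δ := by
      calc ‖G x - G x₀‖ = ‖G (x - x₀)‖ := by rw [map_sub]
      _ ≤ ‖G‖ * ‖x - x₀‖ := G.le_opNorm _
      _ ≤ δ := by rw [hG]; linarith
    have h2 : ‖G x‖ - ‖G x₀‖ ≤ δ := le_trans (norm_sub_norm_le _ _) h1
    have := hxA.2
    linarith
  refine le_antisymm hub ?_
  refine le_of_forall_pos_le_add fun ε hε => ?_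
  have := hlb (ε / 2) (by linarith)
  linarith
end

section
/- Let X, Y be Banach spaces and G : X → Y a norm-one operator. Suppose B_X equals the closed convex hull of its denting points. Then G is generating if and only if ‖Gx‖ = 1 for every denting point x of B_X. -/
open Metric Set

theorem stmt8 {X Y : Type*} [NormedAddCommGroup X] [NormedSpace ℝ X] [CompleteSpace X]
    [NormedAddCommGroup Y] [NormedSpace ℝ Y] [CompleteSpace Y]
    (G : X →L[ℝ] Y) (hG : ‖G‖ = 1)
    (hB : Metric.closedBall (0:X) 1 = closure (convexHull ℝ
        {x : X | ‖x‖ ≤ 1 ∧ ∀ r > (0:ℝ),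
          x ∉ closure (convexHull ℝ (Metric.closedBall (0:X) 1 \ Metric.ball x r))})) :
    (∀ δ > (0:ℝ),
        closure (convexHull ℝ {x : X | ‖x‖ ≤ 1 ∧ 1 - δ < ‖G x‖}) = Metric.closedBall (0:X) 1)
      ↔ ∀ x : X, ‖x‖ ≤ 1 →
          (∀ r > (0:ℝ),
            x ∉ closure (convexHull ℝ (Metric.closedBall (0:X) 1 \ Metric.ball x r))) →
          ‖G x‖ = 1 := by
  constructor
  · intro h x hx hd
    by_contra hne
    have hle : ‖G x‖ ≤ 1 := by
      calc ‖G x‖ ≤ ‖G‖ * ‖x‖ := G.le_opNorm x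
        _ ≤ 1 := by rw [hG, one_mul]; exact hx
    have hlt : ‖G x‖ < 1 := lt_of_le_of_ne hle hne
    set δ := (1 - ‖G x‖) / 2 with hδdef
    have hδ : 0 < δ := by simp only [hδdef]; linarith
    have hsub : {y : X | ‖y‖ ≤ 1 ∧ 1 - δ < ‖G y‖} ⊆
        Metric.closedBall (0:X) 1 \ Metric.ball x δ := by
      rintro y ⟨hy1, hy2⟩
      refine ⟨by simpa [Metric.mem_closedBall, dist_zero_right] using hy1, ?_⟩
      simp only [Metric.mem_ball, dist_eq_norm]
      intro hball
      have h1 : ‖G (y - x)‖ ≤ ‖y - x‖ := by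
        calc ‖G (y - x)‖ ≤ ‖G‖ * ‖y - x‖ := G.le_opNorm _
          _ = ‖y - x‖ := by rw [hG, one_mul]
      have h2 : ‖G y‖ ≤ ‖G x‖ + ‖G (y - x)‖ := by
        have : G y = G x + G (y - x) := by rw [map_sub]; abel
        rw [this]; exact norm_add_le _ _
      have : ‖G y‖ < 1 - δ := by
        have : ‖G y‖ < ‖G x‖ + δ := lt_of_le_of_lt h2 (by linarith [lt_of_le_of_lt h1 hball])
        simp only [hδdef] at this ⊢; linarith
      linarith
    have hxmem : x ∈ closure (convexHull ℝ {y : X | ‖y‖ ≤ 1 ∧ 1 - δ < ‖G y‖}) := by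
      rw [h δ hδ]
      simpa [Metric.mem_closedBall, dist_zero_right] using hx
    exact hd δ hδ (closure_mono (convexHull_mono hsub) hxmem)
  · intro h δ hδ
    apply Subset.antisymm
    · refine closure_minimal (convexHull_min ?_ (convex_closedBall _ _)) Metric.isClosed_closedBall
      intro y hy
      simpa [Metric.mem_closedBall, dist_zero_right] using hy.1
    · rw [hB]
      refine closure_mono (convexHull_mono ?_)
      rintro y ⟨hy1, hy2⟩
      exact ⟨hy1, by rw [h y hy1 hy2]; linarith⟩
end

section
/- Let Y be a Banach space and G : ℓ₁ → Y a norm-one operator. Then G is generating if and only if ‖G(e_n)‖ = 1 for every n ∈ ℕ, where (e_n) is the canonical basis of ℓ₁. -/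
open Metric Set

section Stmt9Aux

local notation "ℓ₁" => lp (fun _ : ℕ => ℝ) 1

lemma stmt9_hasSum_norm (f : ℓ₁) : HasSum (fun i => |f i|) ‖f‖ := by
  have := lp.hasSum_norm (p := 1) (by norm_num) f
  simpa [Real.rpow_one] using this

noncomputable def stmt9_coord (n : ℕ) : ℓ₁ →L[ℝ] ℝ :=
  LinearMap.mkContinuous
    { toFun := fun x => x n
      map_add' := fun x y => by simp
      map_smul' := fun c x => by simp }
    1 (fun x => by rw [one_mul]; exact lp.norm_apply_le_norm one_ne_zero x n)

lemma stmt9_coord_apply (n : ℕ) (x : ℓ₁) : stmt9_coord n x = x n := rfl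

lemma stmt9_norm_single (n : ℕ) : ‖(lp.single 1 n (1:ℝ) : ℓ₁)‖ = 1 := by
  have := lp.norm_single (E := fun _ : ℕ => ℝ) (p := 1) (by norm_num) n (1:ℝ)
  simpa using this

lemma stmt9_smul_single (n : ℕ) (c : ℝ) :
    c • (lp.single 1 n (1:ℝ) : ℓ₁) = (lp.single 1 n c : ℓ₁) := by
  rw [← lp.single_smul]
  norm_num

lemma stmt9_single_coord (n : ℕ) : (lp.single 1 n (1:ℝ) : ℓ₁) n = 1 :=
  lp.single_apply_self _ _ _

lemma stmt9_norm_sub_single (x : ℓ₁) (hx : ‖x‖ ≤ 1) (n : ℕ) :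
    ‖x - lp.single 1 n (1:ℝ)‖ ≤ 2 * (1 - x n) := by
  have habs : |x n| ≤ 1 := by
    have := lp.norm_apply_le_norm (p := 1) one_ne_zero x n
    simp only [Real.norm_eq_abs] at this
    linarith
  have h1 : ‖x - (lp.single 1 n (x n) : ℓ₁)‖ = ‖x‖ - |x n| := by
    have := lp.norm_compl_sum_single (p := 1) (by norm_num) x {n}
    simpa [Real.rpow_one] using this
  have h2 : ‖x - lp.single 1 n (1:ℝ)‖
      ≤ ‖x - (lp.single 1 n (x n) : ℓ₁)‖ + ‖(lp.single 1 n (x n) : ℓ₁) - lp.single 1 n (1:ℝ)‖ :=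
    norm_sub_le_norm_sub_add_norm_sub x _ _
  have h3 : ‖(lp.single 1 n (x n) : ℓ₁) - lp.single 1 n (1:ℝ)‖ = |x n - 1| := by
    have he : (lp.single 1 n (x n) : ℓ₁) - lp.single 1 n (1:ℝ)
        = (x n - 1) • (lp.single 1 n (1:ℝ) : ℓ₁) := by
      rw [sub_smul, one_smul, stmt9_smul_single]
    rw [he, norm_smul, stmt9_norm_single, Real.norm_eq_abs, mul_one]
  have h4 : x n ≤ |x n| := le_abs_self _
  have h5 : |x n - 1| = 1 - x n := by
    rw [abs_sub_comm]; exact abs_of_nonneg (by linarith [(abs_le.mp habs).2])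
  rw [h3, h5, h1] at h2
  linarith [(abs_le.mp habs).2]


theorem stmt9 {Y : Type*} [NormedAddCommGroup Y] [NormedSpace ℝ Y] [CompleteSpace Y]
    (G : lp (fun _ : ℕ => ℝ) 1 →L[ℝ] Y) (hG : ‖G‖ = 1) :
    (∀ δ ∈ Set.Ioo (0:ℝ) 1,
        closure (convexHull ℝ {x : lp (fun _ : ℕ => ℝ) 1 | ‖x‖ ≤ 1 ∧ 1 - δ < ‖G x‖})
          = Metric.closedBall (0 : lp (fun _ : ℕ => ℝ) 1) 1)
      ↔ ∀ n : ℕ, ‖G (lp.single 1 n (1:ℝ))‖ = 1 := by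
  constructor
  · intro h n
    set e : ℓ₁ := lp.single 1 n (1:ℝ) with he
    have hen : ‖e‖ = 1 := stmt9_norm_single n
    have hle : ‖G e‖ ≤ 1 := by
      calc ‖G e‖ ≤ ‖G‖ * ‖e‖ := G.le_opNorm e
        _ = 1 := by rw [hG, hen, one_mul]
    by_contra hne
    have hlt : ‖G e‖ < 1 := lt_of_le_of_ne hle hne
    set ε : ℝ := 1 - ‖G e‖ with hε
    have hε0 : 0 < ε := by simp only [hε]; linarith
    have hε1 : ε ≤ 1 := by have := norm_nonneg (G e); simp only [hε]; linarith
    have hball := h (ε/4) ⟨by linarith, by linarith⟩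
    set S := {x : ℓ₁ | ‖x‖ ≤ 1 ∧ 1 - ε/4 < ‖G x‖} with hS
    have hsub : S ⊆ stmt9_coord n ⁻¹' (Set.Iic (1 - ε/4)) := by
      rintro x ⟨hx1, hx2⟩
      simp only [Set.mem_preimage, Set.mem_Iic, stmt9_coord_apply]
      by_contra hc
      push_neg at hc
      have hsb : ‖x - e‖ ≤ 2 * (1 - x n) := stmt9_norm_sub_single x hx1 n
      have hn1 := norm_sub_norm_le (G x) (G e)
      rw [← map_sub] at hn1
      have hGxe : ‖G (x - e)‖ ≤ ‖x - e‖ := by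
        calc ‖G (x - e)‖ ≤ ‖G‖ * ‖x - e‖ := G.le_opNorm _
          _ = ‖x - e‖ := by rw [hG, one_mul]
      linarith
    have hclosed : IsClosed (stmt9_coord n ⁻¹' (Set.Iic (1 - ε/4))) :=
      isClosed_Iic.preimage (stmt9_coord n).continuous
    have hconv : Convex ℝ (stmt9_coord n ⁻¹' (Set.Iic (1 - ε/4))) := by
      intro x hx y hy a b ha hb hab
      simp only [Set.mem_preimage, Set.mem_Iic, map_add, map_smul, smul_eq_mul] at *
      nlinarith [mul_le_mul_of_nonneg_left hx ha, mul_le_mul_of_nonneg_left hy hb]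
    have hmem : e ∈ closure (convexHull ℝ S) := by
      rw [hball]; exact mem_closedBall_zero_iff.mpr (le_of_eq hen)
    have hfin := closure_minimal (convexHull_min hsub hconv) hclosed hmem
    simp only [Set.mem_preimage, Set.mem_Iic, stmt9_coord_apply] at hfin
    rw [he, stmt9_single_coord] at hfin
    linarith
  · intro h δ hδ
    obtain ⟨hδ0, hδ1⟩ := hδ
    set S := {x : ℓ₁ | ‖x‖ ≤ 1 ∧ 1 - δ < ‖G x‖} with hS
    have hmem : ∀ n : ℕ, (lp.single 1 n (1:ℝ) : ℓ₁) ∈ S ∧ (-(lp.single 1 n (1:ℝ)) : ℓ₁) ∈ S := by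
      intro n
      have h1 : ‖(lp.single 1 n (1:ℝ) : ℓ₁)‖ = 1 := stmt9_norm_single n
      refine ⟨⟨le_of_eq h1, ?_⟩, ⟨by rw [norm_neg]; exact le_of_eq h1, ?_⟩⟩
      · rw [h n]; linarith
      · rw [map_neg, norm_neg, h n]; linarith
    have h0 : (0 : ℓ₁) ∈ convexHull ℝ S := by
      have := (convex_convexHull ℝ S) (subset_convexHull ℝ S (hmem 0).1)
        (subset_convexHull ℝ S (hmem 0).2)
        (by norm_num : (0:ℝ) ≤ 1/2) (by norm_num : (0:ℝ) ≤ 1/2) (by norm_num)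
      simpa [smul_neg] using this
    apply Set.Subset.antisymm
    · refine closure_minimal (convexHull_min ?_ (convex_closedBall _ _)) Metric.isClosed_closedBall
      intro x hx
      exact mem_closedBall_zero_iff.mpr hx.1
    · intro x hx
      rw [mem_closedBall_zero_iff] at hx
      have hsum := (lp.hasSum_single (E := fun _ : ℕ => ℝ) (p := 1)
        ENNReal.one_ne_top x).tendsto_sum_nat
      refine mem_closure_of_tendsto hsum ?_
      filter_upwards with m
      set s : ℝ := ∑ k ∈ Finset.range m, |x k| with hs
      have hs1 : s ≤ 1 := by
        have hsum' : s ≤ ‖x‖ := by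
          have := Summable.sum_le_tsum (Finset.range m) (fun i _ => abs_nonneg (x i))
            (stmt9_hasSum_norm x).summable
          rwa [(stmt9_hasSum_norm x).tsum_eq] at this
        linarith
      set w : ℕ → ℝ := fun k => if k = m then 1 - s else |x k| with hw
      set z : ℕ → ℓ₁ := fun k => if k = m then 0 else
        (if 0 ≤ x k then lp.single 1 k (1:ℝ) else -(lp.single 1 k (1:ℝ))) with hz
      have hzmem : ∀ k ∈ Finset.range (m+1), z k ∈ convexHull ℝ S := by
        intro k _
        by_cases hk : k = m
        · simp only [hz, if_pos hk]; exact h0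
        · by_cases hx0 : 0 ≤ x k
          · simp only [hz, if_neg hk, if_pos hx0]
            exact subset_convexHull ℝ S (hmem k).1
          · simp only [hz, if_neg hk, if_neg hx0]
            exact subset_convexHull ℝ S (hmem k).2
      have hwnn : ∀ k ∈ Finset.range (m+1), 0 ≤ w k := by
        intro k _
        by_cases hk : k = m
        · simp only [hw, if_pos hk]; linarith
        · simp only [hw, if_neg hk]; exact abs_nonneg _
      have hwsum : ∑ k ∈ Finset.range (m+1), w k = 1 := by
        rw [Finset.sum_range_succ]
        have h1 : ∑ k ∈ Finset.range m, w k = s := by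
          refine Finset.sum_congr rfl (fun k hk => ?_)
          simp only [hw, if_neg (Nat.ne_of_lt (Finset.mem_range.mp hk))]
        rw [h1]
        simp only [hw, if_pos rfl]
        ring
      have hcm := (convex_convexHull ℝ S).sum_mem hwnn hwsum hzmem
      have hrepr : ∑ k ∈ Finset.range (m+1), w k • z k
          = ∑ k ∈ Finset.range m, (lp.single 1 k (x k) : ℓ₁) := by
        rw [Finset.sum_range_succ]
        have hm : w m • z m = 0 := by simp [hw, hz]
        rw [hm, add_zero]
        refine Finset.sum_congr rfl (fun k hk => ?_)
        have hkm : k ≠ m := Nat.ne_of_lt (Finset.mem_range.mp hk)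
        by_cases hx0 : 0 ≤ x k
        · simp only [hw, hz, if_neg hkm, if_pos hx0]
          rw [abs_of_nonneg hx0, stmt9_smul_single]
        · simp only [hw, hz, if_neg hkm, if_neg hx0]
          rw [abs_of_neg (lt_of_not_ge hx0), smul_neg, ← neg_smul, neg_neg, stmt9_smul_single]
      rwa [hrepr] at hcm

end Stmt9Aux
end

section
/- Let X, Y be Banach spaces and G : X → Y a norm-one operator. Then G is generating if and only if G*(B_{Y*}) is a spear set of X*, i.e., if and only if max_{θ∈𝕋} sup_{y*∈B_{Y*}} ‖G*(y*) + θx*‖ = 1 + ‖x*‖ for every x* ∈ X*. -/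
open Metric Set

/-- If a continuous linear functional is `≤ c` on a set, it is `≤ c` on the closed convex hull. -/
lemma le_on_closure_convexHull {X : Type*} [NormedAddCommGroup X] [NormedSpace ℝ X]
    {A : Set X} {f : X →L[ℝ] ℝ} {c : ℝ} (hA : ∀ x ∈ A, f x ≤ c) :
    ∀ x ∈ closure (convexHull ℝ A), f x ≤ c := by
  have hconv : Convex ℝ {x : X | f x ≤ c} :=
    convex_halfSpace_le (f : X →ₗ[ℝ] ℝ).isLinear c
  have hclosed : IsClosed {x : X | f x ≤ c} :=
    isClosed_le f.continuous continuous_const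
  intro x hx
  exact closure_minimal (convexHull_min hA hconv) hclosed hx

theorem stmt11 {X Y : Type*} [NormedAddCommGroup X] [NormedSpace ℝ X] [CompleteSpace X]
    [NormedAddCommGroup Y] [NormedSpace ℝ Y] [CompleteSpace Y]
    (G : X →L[ℝ] Y) (hG : ‖G‖ = 1) :
    (∀ δ > (0:ℝ),
        closure (convexHull ℝ {x : X | ‖x‖ ≤ 1 ∧ 1 - δ < ‖G x‖}) = Metric.closedBall (0:X) 1)
      ↔ ∀ f : X →L[ℝ] ℝ,
          sSup {r : ℝ | ∃ θ : ℝ, |θ| = 1 ∧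
            ∃ g : Y →L[ℝ] ℝ, ‖g‖ ≤ 1 ∧ r = ‖g.comp G + θ • f‖} = 1 + ‖f‖ := by
  -- generic facts about the set S f
  have hSne : ∀ f : X →L[ℝ] ℝ, (‖f‖ : ℝ) ∈ {r : ℝ | ∃ θ : ℝ, |θ| = 1 ∧
      ∃ g : Y →L[ℝ] ℝ, ‖g‖ ≤ 1 ∧ r = ‖g.comp G + θ • f‖} := by
    intro f
    refine ⟨1, abs_one, 0, by simp, ?_⟩
    simp [ContinuousLinearMap.zero_comp, one_smul]
  have hSub : ∀ f : X →L[ℝ] ℝ, ∀ r ∈ {r : ℝ | ∃ θ : ℝ, |θ| = 1 ∧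
      ∃ g : Y →L[ℝ] ℝ, ‖g‖ ≤ 1 ∧ r = ‖g.comp G + θ • f‖}, r ≤ 1 + ‖f‖ := by
    rintro f r ⟨θ, hθ, g, hg, rfl⟩
    calc ‖g.comp G + θ • f‖ ≤ ‖g.comp G‖ + ‖θ • f‖ := norm_add_le _ _
      _ ≤ ‖g‖ * ‖G‖ + ‖θ‖ * ‖f‖ := by
          have h1 : ‖θ • f‖ = ‖θ‖ * ‖f‖ := norm_smul θ f
          have h2 := ContinuousLinearMap.opNorm_comp_le g G
          rw [h1]; linarith
      _ ≤ 1 * 1 + 1 * ‖f‖ := by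
          have : ‖θ‖ = 1 := by rw [Real.norm_eq_abs, hθ]
          rw [hG, this]
          gcongr
      _ = 1 + ‖f‖ := by ring
  constructor
  · -- generating → spear set
    intro hgen f
    set S := {r : ℝ | ∃ θ : ℝ, |θ| = 1 ∧
      ∃ g : Y →L[ℝ] ℝ, ‖g‖ ≤ 1 ∧ r = ‖g.comp G + θ • f‖} with hS
    have hne : S.Nonempty := ⟨‖f‖, hSne f⟩
    have hbdd : BddAbove S := ⟨1 + ‖f‖, fun r hr => hSub f r hr⟩
    refine le_antisymm (csSup_le hne (fun r hr => hSub f r hr)) ?_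
    refine le_of_forall_lt fun c hc => ?_
    rw [lt_csSup_iff hbdd hne]
    -- pick a small ε
    set ε : ℝ := min (1 + ‖f‖ - c) (1/2) with hε
    have hεpos : 0 < ε := lt_min (by linarith) (by norm_num)
    have hεle : ε ≤ 1/2 := min_le_right _ _
    have hεc : c ≤ 1 + ‖f‖ - ε := by
      have := min_le_left (1 + ‖f‖ - c) (1/2)
      simp only [← hε] at this
      linarith
    -- find x₀ with ‖x₀‖ ≤ 1 and ‖f‖ - ε/3 < f x₀
    obtain ⟨x, hx1, hx2⟩ := f.exists_lt_apply_of_lt_opNorm (r := ‖f‖ - ε/3) (by linarith)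
    rw [Real.norm_eq_abs] at hx2
    set x₀ : X := (if 0 ≤ f x then (1:ℝ) else -1) • x with hx₀def
    have hx₀norm : ‖x₀‖ ≤ 1 := by
      rw [hx₀def, norm_smul]
      have : ‖if 0 ≤ f x then (1:ℝ) else -1‖ = 1 := by split <;> simp
      rw [this, one_mul]; exact hx1.le
    have hfx₀ : ‖f‖ - ε/3 < f x₀ := by
      rw [hx₀def, map_smul, smul_eq_mul]
      rcases le_or_gt 0 (f x) with h | h
      · simpa [if_pos h, abs_of_nonneg h] using hx2
      · rw [if_neg (not_le.2 h)]
        rw [abs_of_neg h] at hx2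
        linarith
    -- find z in the generating slice with f z large
    have hδ : (0:ℝ) < ε/3 := by linarith
    have hball := hgen (ε/3) hδ
    obtain ⟨z, hz, hfz⟩ : ∃ z : X, (‖z‖ ≤ 1 ∧ 1 - ε/3 < ‖G z‖) ∧ ‖f‖ - 2*ε/3 < f z := by
      by_contra hcon
      push_neg at hcon
      have : ∀ z ∈ {x : X | ‖x‖ ≤ 1 ∧ 1 - ε/3 < ‖G x‖}, f z ≤ ‖f‖ - 2*ε/3 := by
        intro z hz; exact hcon z hz
      have hx₀mem : x₀ ∈ closure (convexHull ℝ {x : X | ‖x‖ ≤ 1 ∧ 1 - ε/3 < ‖G x‖}) := by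
        rw [hball]; exact mem_closedBall_zero_iff.2 hx₀norm
      have := le_on_closure_convexHull this x₀ hx₀mem
      linarith
    obtain ⟨hz1, hz2⟩ := hz
    have hGz : G z ≠ 0 := by
      intro h
      rw [h, norm_zero] at hz2
      linarith
    obtain ⟨g, hg1, hg2⟩ := exists_dual_vector ℝ (G z) (norm_ne_zero_iff.mpr hGz)
    refine ⟨‖g.comp G + (1:ℝ) • f‖, ⟨1, abs_one, g, hg1.le, rfl⟩, ?_⟩
    have hval : (g.comp G + (1:ℝ) • f) z = ‖G z‖ + f z := by
      simp [ContinuousLinearMap.add_apply, ContinuousLinearMap.comp_apply, hg2]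
    have hle : (g.comp G + (1:ℝ) • f) z ≤ ‖g.comp G + (1:ℝ) • f‖ := by
      have h1 : ‖(g.comp G + (1:ℝ) • f) z‖ ≤ ‖g.comp G + (1:ℝ) • f‖ :=
        ContinuousLinearMap.unit_le_opNorm _ _ hz1
      rw [Real.norm_eq_abs] at h1
      exact (le_abs_self _).trans h1
    rw [hval] at hle
    linarith
  · -- spear set → generating
    intro hsp δ hδ
    set A := {x : X | ‖x‖ ≤ 1 ∧ 1 - δ < ‖G x‖} with hA
    apply Set.Subset.antisymm
    · exact closure_minimal (convexHull_min (fun x hx => mem_closedBall_zero_iff.2 hx.1)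
        (convex_closedBall _ _)) Metric.isClosed_closedBall
    · intro x₀ hx₀
      by_contra hni
      rw [mem_closedBall_zero_iff] at hx₀
      set C := closure (convexHull ℝ A) with hC
      obtain ⟨f, u, hfu, hux₀⟩ := geometric_hahn_banach_closed_point
        ((convex_convexHull ℝ A).closure) isClosed_closure hni
      -- A is nonempty, symmetric; 0 ∈ C
      obtain ⟨z, hz1, hz2⟩ := G.exists_lt_apply_of_lt_opNorm (r := 1 - δ) (by rw [hG]; linarith)
      have hzA : z ∈ A := ⟨hz1.le, hz2⟩
      have hzA' : -z ∈ A := by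
        constructor
        · rw [norm_neg]; exact hz1.le
        · rw [map_neg, norm_neg]; exact hz2
      have h0C : (0:X) ∈ C := by
        apply subset_closure
        have := (convex_convexHull ℝ A) (subset_convexHull ℝ A hzA)
          (subset_convexHull ℝ A hzA') (by norm_num : (0:ℝ) ≤ 1/2)
          (by norm_num : (0:ℝ) ≤ 1/2) (by norm_num)
        simpa using this
      have hu0 : 0 < u := by
        have := hfu 0 h0C
        simpa using this
      have hfx₀pos : 0 < f x₀ := lt_trans hu0 hux₀
      have hfnorm : f x₀ ≤ ‖f‖ := by
        calc f x₀ ≤ |f x₀| := le_abs_self _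
          _ = ‖f x₀‖ := (Real.norm_eq_abs _).symm
          _ ≤ ‖f‖ * ‖x₀‖ := f.le_opNorm x₀
          _ ≤ ‖f‖ * 1 := by gcongr
          _ = ‖f‖ := mul_one _
      set ε : ℝ := min δ (f x₀ - u) with hεdef
      have hεpos : 0 < ε := lt_min hδ (by linarith)
      have hεδ : ε ≤ δ := min_le_left _ _
      have hεu : ε ≤ f x₀ - u := min_le_right _ _
      -- use the spear property
      have hsup := hsp f
      have hlt : 1 + ‖f‖ - ε < sSup {r : ℝ | ∃ θ : ℝ, |θ| = 1 ∧
          ∃ g : Y →L[ℝ] ℝ, ‖g‖ ≤ 1 ∧ r = ‖g.comp G + θ • f‖} := by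
        rw [hsup]; linarith
      rw [lt_csSup_iff ⟨1 + ‖f‖, fun r hr => hSub f r hr⟩ ⟨‖f‖, hSne f⟩] at hlt
      obtain ⟨r, ⟨θ, hθ, g, hg, rfl⟩, hr⟩ := hlt
      obtain ⟨x, hx1, hx2⟩ := (g.comp G + θ • f).exists_lt_apply_of_lt_opNorm hr
      have happ : (g.comp G + θ • f) x = g (G x) + θ * f x := by
        simp [ContinuousLinearMap.add_apply, ContinuousLinearMap.comp_apply]
      rw [Real.norm_eq_abs, happ] at hx2
      -- basic bounds
      have hGx1 : ‖G x‖ ≤ 1 := by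
        calc ‖G x‖ ≤ ‖G‖ * ‖x‖ := G.le_opNorm x
          _ ≤ 1 * 1 := by rw [hG, one_mul, one_mul]; exact hx1.le
          _ = 1 := one_mul 1
      have hgGx : |g (G x)| ≤ ‖G x‖ := by
        calc |g (G x)| = ‖g (G x)‖ := (Real.norm_eq_abs _).symm
          _ ≤ ‖g‖ * ‖G x‖ := g.le_opNorm _
          _ ≤ 1 * ‖G x‖ := by gcongr
          _ = ‖G x‖ := one_mul _
      have hfxb : |f x| ≤ ‖f‖ := by
        calc |f x| = ‖f x‖ := (Real.norm_eq_abs _).symm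
          _ ≤ ‖f‖ * ‖x‖ := f.le_opNorm x
          _ ≤ ‖f‖ * 1 := by gcongr
          _ = ‖f‖ := mul_one _
      have habs : |g (G x) + θ * f x| ≤ |g (G x)| + |θ * f x| := abs_add_le _ _
      have hθf : |θ * f x| = |f x| := by rw [abs_mul, hθ, one_mul]
      -- x belongs to the slice A
      have hGxbig : 1 - δ < ‖G x‖ := by
        have : 1 - ε < |g (G x)| := by
          rw [hθf] at habs
          linarith
        linarith [hgGx]
      have hxA : x ∈ A := ⟨hx1.le, hGxbig⟩
      have hxA' : -x ∈ A := by
        constructor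
        · rw [norm_neg]; exact hx1.le
        · rw [map_neg, norm_neg]; exact hGxbig
      -- f is small on A, but |f x| is big: contradiction
      have h1 : f x < u := hfu x (subset_closure (subset_convexHull ℝ A hxA))
      have h2 : f (-x) < u := hfu (-x) (subset_closure (subset_convexHull ℝ A hxA'))
      rw [map_neg] at h2
      have hfxu : |f x| < u := abs_lt.2 ⟨by linarith, h1⟩
      have hfxbig : ‖f‖ - ε < |f x| := by
        rw [hθf] at habs
        linarith [hgGx, hGx1]
      linarith
end

section
/- Let X₁, X₂, Y₁, Y₂ be Banach spaces and G₁ : X₁ → Y₁, G₂ : X₂ → Y₂ norm-one generating operators. Then the operator G : X₁ ⊕_∞ X₂ → Y₁ ⊕_∞ Y₂ defined by G(x₁, x₂) = (G₁x₁, G₂x₂) is generating. -/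
open Metric Set

theorem stmt12 {X₁ X₂ Y₁ Y₂ : Type*}
    [NormedAddCommGroup X₁] [NormedSpace ℝ X₁] [CompleteSpace X₁]
    [NormedAddCommGroup X₂] [NormedSpace ℝ X₂] [CompleteSpace X₂]
    [NormedAddCommGroup Y₁] [NormedSpace ℝ Y₁] [CompleteSpace Y₁]
    [NormedAddCommGroup Y₂] [NormedSpace ℝ Y₂] [CompleteSpace Y₂]
    (G₁ : X₁ →L[ℝ] Y₁) (G₂ : X₂ →L[ℝ] Y₂) (h₁ : ‖G₁‖ = 1) (h₂ : ‖G₂‖ = 1)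
    (hg₁ : ∀ δ > (0:ℝ),
      closure (convexHull ℝ {x : X₁ | ‖x‖ ≤ 1 ∧ 1 - δ < ‖G₁ x‖}) = Metric.closedBall (0:X₁) 1)
    (hg₂ : ∀ δ > (0:ℝ),
      closure (convexHull ℝ {x : X₂ | ‖x‖ ≤ 1 ∧ 1 - δ < ‖G₂ x‖}) = Metric.closedBall (0:X₂) 1) :
    ∀ δ > (0:ℝ),
      closure (convexHull ℝ {p : X₁ × X₂ | ‖p‖ ≤ 1 ∧ 1 - δ < ‖(G₁.prodMap G₂) p‖})
        = Metric.closedBall (0 : X₁ × X₂) 1 := by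
  intro δ hδ
  set S₁ : Set X₁ := {x : X₁ | ‖x‖ ≤ 1 ∧ 1 - δ < ‖G₁ x‖}
  set S₂ : Set X₂ := {x : X₂ | ‖x‖ ≤ 1 ∧ 1 - δ < ‖G₂ x‖}
  set S : Set (X₁ × X₂) := {p : X₁ × X₂ | ‖p‖ ≤ 1 ∧ 1 - δ < ‖(G₁.prodMap G₂) p‖}
  apply Subset.antisymm
  · refine closure_minimal (convexHull_min ?_ (convex_closedBall _ _)) Metric.isClosed_closedBall
    intro p hp
    simpa [mem_closedBall_zero_iff] using hp.1
  · have hsub : S₁ ×ˢ S₂ ⊆ S := by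
      rintro ⟨x₁, x₂⟩ ⟨⟨hn₁, hG1⟩, ⟨hn₂, hG2⟩⟩
      constructor
      · simpa [Prod.norm_def] using max_le hn₁ hn₂
      · have : ‖(G₁.prodMap G₂) (x₁, x₂)‖ = max ‖G₁ x₁‖ ‖G₂ x₂‖ := by
          simp [Prod.norm_def]
        rw [this]
        exact lt_max_of_lt_left hG1
    calc Metric.closedBall (0 : X₁ × X₂) 1
        = Metric.closedBall (0:X₁) 1 ×ˢ Metric.closedBall (0:X₂) 1 :=
          (closedBall_prod_same _ _ _).symm
      _ = closure (convexHull ℝ S₁) ×ˢ closure (convexHull ℝ S₂) := by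
          rw [hg₁ δ hδ, hg₂ δ hδ]
      _ = closure (convexHull ℝ S₁ ×ˢ convexHull ℝ S₂) := (closure_prod_eq).symm
      _ = closure (convexHull ℝ (S₁ ×ˢ S₂)) := by rw [convexHull_prod]
      _ ⊆ closure (convexHull ℝ S) := closure_mono (convexHull_mono hsub)
end

section
/- Let X₁, X₂, Y₁, Y₂ be Banach spaces and G₁ : X₁ → Y₁, G₂ : X₂ → Y₂ norm-one generating operators. Then the operator G : X₁ ⊕₁ X₂ → Y₁ ⊕₁ Y₂ defined by G(x₁, x₂) = (G₁x₁, G₂x₂) is generating. -/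
open Metric Set

private lemma withlp_one_norm {α β : Type*} [NormedAddCommGroup α] [NormedAddCommGroup β]
    (f : WithLp 1 (α × β)) : ‖f‖ = ‖f.fst‖ + ‖f.snd‖ := by
  rw [WithLp.prod_norm_eq_add (by norm_num)]
  norm_num

private lemma clm_image_closure_convexHull {E F : Type*} [NormedAddCommGroup E]
    [NormedSpace ℝ E] [NormedAddCommGroup F] [NormedSpace ℝ F]
    (f : E →L[ℝ] F) (s : Set E) :
    ⇑f '' closure (convexHull ℝ s) ⊆ closure (convexHull ℝ (⇑f '' s)) := by
  refine (image_closure_subset_closure_image f.continuous).trans (closure_mono ?_)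
  exact (f.toLinearMap.image_convexHull s).subset

theorem stmt13 {X₁ X₂ Y₁ Y₂ : Type*}
    [NormedAddCommGroup X₁] [NormedSpace ℝ X₁] [CompleteSpace X₁]
    [NormedAddCommGroup X₂] [NormedSpace ℝ X₂] [CompleteSpace X₂]
    [NormedAddCommGroup Y₁] [NormedSpace ℝ Y₁] [CompleteSpace Y₁]
    [NormedAddCommGroup Y₂] [NormedSpace ℝ Y₂] [CompleteSpace Y₂]
    (G₁ : X₁ →L[ℝ] Y₁) (G₂ : X₂ →L[ℝ] Y₂) (h₁ : ‖G₁‖ = 1) (h₂ : ‖G₂‖ = 1)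
    (hg₁ : ∀ δ > (0:ℝ),
      closure (convexHull ℝ {x : X₁ | ‖x‖ ≤ 1 ∧ 1 - δ < ‖G₁ x‖}) = Metric.closedBall (0:X₁) 1)
    (hg₂ : ∀ δ > (0:ℝ),
      closure (convexHull ℝ {x : X₂ | ‖x‖ ≤ 1 ∧ 1 - δ < ‖G₂ x‖}) = Metric.closedBall (0:X₂) 1)
    (G : WithLp 1 (X₁ × X₂) →L[ℝ] WithLp 1 (Y₁ × Y₂))
    (hGdef : ∀ x₁ : X₁, ∀ x₂ : X₂,
      WithLp.equiv 1 (Y₁ × Y₂) (G ((WithLp.equiv 1 (X₁ × X₂)).symm (x₁, x₂))) = (G₁ x₁, G₂ x₂)) :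
    ∀ δ > (0:ℝ),
      closure (convexHull ℝ {p : WithLp 1 (X₁ × X₂) | ‖p‖ ≤ 1 ∧ 1 - δ < ‖G p‖})
        = Metric.closedBall (0 : WithLp 1 (X₁ × X₂)) 1 := by
  intro δ hδ
  set S := {p : WithLp 1 (X₁ × X₂) | ‖p‖ ≤ 1 ∧ 1 - δ < ‖G p‖} with hS
  set K := closure (convexHull ℝ S) with hK
  have hGnorm : ∀ (x₁ : X₁) (x₂ : X₂),
      ‖G ((WithLp.equiv 1 (X₁ × X₂)).symm (x₁, x₂))‖ = ‖G₁ x₁‖ + ‖G₂ x₂‖ := by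
    intro x₁ x₂
    rw [withlp_one_norm]
    have h := hGdef x₁ x₂
    have hf : (G ((WithLp.equiv 1 (X₁ × X₂)).symm (x₁, x₂))).fst = G₁ x₁ := by
      exact congrArg Prod.fst h
    have hs : (G ((WithLp.equiv 1 (X₁ × X₂)).symm (x₁, x₂))).snd = G₂ x₂ := by
      exact congrArg Prod.snd h
    rw [hf, hs]
  -- the two coordinate embeddings as continuous linear maps
  set e₁ : X₁ →L[ℝ] WithLp 1 (X₁ × X₂) :=
      ((WithLp.prodContinuousLinearEquiv 1 ℝ X₁ X₂).symm :
        (X₁ × X₂) →L[ℝ] WithLp 1 (X₁ × X₂)).comp (ContinuousLinearMap.inl ℝ X₁ X₂) with he₁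
  set e₂ : X₂ →L[ℝ] WithLp 1 (X₁ × X₂) :=
      ((WithLp.prodContinuousLinearEquiv 1 ℝ X₁ X₂).symm :
        (X₁ × X₂) →L[ℝ] WithLp 1 (X₁ × X₂)).comp (ContinuousLinearMap.inr ℝ X₁ X₂) with he₂
  have he₁app : ∀ x : X₁, e₁ x = (WithLp.equiv 1 (X₁ × X₂)).symm (x, 0) := fun x => rfl
  have he₂app : ∀ x : X₂, e₂ x = (WithLp.equiv 1 (X₁ × X₂)).symm (0, x) := fun x => rfl
  have hA : ∀ x₁ : X₁, ‖x₁‖ ≤ 1 → (WithLp.equiv 1 (X₁ × X₂)).symm (x₁, 0) ∈ K := by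
    intro x₁ hx₁
    have hmem : x₁ ∈ closure (convexHull ℝ {x : X₁ | ‖x‖ ≤ 1 ∧ 1 - δ < ‖G₁ x‖}) := by
      rw [hg₁ δ hδ]; exact mem_closedBall_zero_iff.2 hx₁
    have hsub : e₁ '' {x : X₁ | ‖x‖ ≤ 1 ∧ 1 - δ < ‖G₁ x‖} ⊆ S := by
      rintro _ ⟨x, ⟨hx1, hx2⟩, rfl⟩
      refine ⟨?_, ?_⟩
      · rw [he₁app]; exact (WithLp.norm_toLp_fst 1 X₁ X₂ x).trans_le hx1
      · rw [he₁app, hGnorm]; simp only [map_zero, norm_zero, add_zero]; exact hx2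
    have h1 : e₁ x₁ ∈ closure (convexHull ℝ (e₁ '' {x : X₁ | ‖x‖ ≤ 1 ∧ 1 - δ < ‖G₁ x‖})) :=
      clm_image_closure_convexHull e₁ _ ⟨x₁, hmem, rfl⟩
    rw [← he₁app]
    exact closure_mono (convexHull_mono hsub) h1
  have hB : ∀ x₂ : X₂, ‖x₂‖ ≤ 1 → (WithLp.equiv 1 (X₁ × X₂)).symm (0, x₂) ∈ K := by
    intro x₂ hx₂
    have hmem : x₂ ∈ closure (convexHull ℝ {x : X₂ | ‖x‖ ≤ 1 ∧ 1 - δ < ‖G₂ x‖}) := by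
      rw [hg₂ δ hδ]; exact mem_closedBall_zero_iff.2 hx₂
    have hsub : e₂ '' {x : X₂ | ‖x‖ ≤ 1 ∧ 1 - δ < ‖G₂ x‖} ⊆ S := by
      rintro _ ⟨x, ⟨hx1, hx2⟩, rfl⟩
      refine ⟨?_, ?_⟩
      · rw [he₂app]; exact (WithLp.norm_toLp_snd 1 X₁ X₂ x).trans_le hx1
      · rw [he₂app, hGnorm]; simp only [map_zero, norm_zero, zero_add]; exact hx2
    have h1 : e₂ x₂ ∈ closure (convexHull ℝ (e₂ '' {x : X₂ | ‖x‖ ≤ 1 ∧ 1 - δ < ‖G₂ x‖})) :=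
      clm_image_closure_convexHull e₂ _ ⟨x₂, hmem, rfl⟩
    rw [← he₂app]
    exact closure_mono (convexHull_mono hsub) h1
  have hKconv : Convex ℝ K := (convex_convexHull ℝ S).closure
  apply Subset.antisymm
  · have hsub : S ⊆ closedBall (0 : WithLp 1 (X₁ × X₂)) 1 := fun p hp =>
      mem_closedBall_zero_iff.2 hp.1
    calc K ⊆ closure (convexHull ℝ (closedBall (0 : WithLp 1 (X₁ × X₂)) 1)) :=
          closure_mono (convexHull_mono hsub)
      _ = closedBall 0 1 := by
          rw [(convex_closedBall _ _).convexHull_eq, closure_closedBall]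
  · intro p hp
    rw [mem_closedBall_zero_iff, withlp_one_norm] at hp
    set s := ‖p.snd‖ with hsdef
    have hs0 : 0 ≤ s := norm_nonneg _
    by_cases hs1 : s = 1
    · -- then p.fst = 0
      have hf0 : p.fst = 0 := by
        have : ‖p.fst‖ ≤ 0 := by linarith
        exact norm_le_zero_iff.1 this
      have : p = (WithLp.equiv 1 (X₁ × X₂)).symm (0, p.snd) := by
        apply (WithLp.equiv 1 (X₁ × X₂)).injective
        apply Prod.ext
        · exact hf0
        · rfl
      rw [this]
      exact hB p.snd (by rw [← hsdef, hs1])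
    · have hslt : s < 1 := lt_of_le_of_ne (by linarith [norm_nonneg p.fst]) hs1
      set t : ℝ := 1 - s with ht
      have ht0 : 0 < t := by linarith
      set a := (WithLp.equiv 1 (X₁ × X₂)).symm (t⁻¹ • p.fst, 0) with ha
      set b := (WithLp.equiv 1 (X₁ × X₂)).symm (0, s⁻¹ • p.snd) with hb
      have haK : a ∈ K := by
        apply hA
        rw [norm_smul, norm_inv, Real.norm_eq_abs, abs_of_pos ht0, inv_mul_le_one₀ ht0]
        linarith
      have hbK : b ∈ K := by
        apply hB
        rw [norm_smul, norm_inv, Real.norm_eq_abs, abs_of_nonneg hs0, ← hsdef]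
        rcases eq_or_ne s 0 with h | h
        · simp [h]
        · rw [inv_mul_cancel₀ h]
      have hpeq : p = t • a + s • b := by
        apply (WithLp.equiv 1 (X₁ × X₂)).injective
        apply Prod.ext
        · show p.fst = t • (t⁻¹ • p.fst) + s • ((0:X₁))
          rw [smul_inv_smul₀ ht0.ne', smul_zero, add_zero]
        · show p.snd = t • (0:X₂) + s • (s⁻¹ • p.snd)
          rcases eq_or_ne s 0 with h | h
          · have : p.snd = 0 := norm_le_zero_iff.1 (by rw [← hsdef, h])
            simp [this, h]
          · rw [smul_inv_smul₀ h, smul_zero, zero_add]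
      rw [hpeq]
      exact hKconv haK hbK ht0.le hs0 (by ring)
end

section
/- Let X, Y be Banach spaces, G : X → Y a norm-one operator, and r ∈ (0,1]. If G** : X** → Y** is r-generating, then G is r-generating. -/
open Metric Set

/-- Two-functional Goldstine / Helly lemma. -/
lemma goldstine2 {X : Type*} [NormedAddCommGroup X] [NormedSpace ℝ X]
    (Φ : (X →L[ℝ] ℝ) →L[ℝ] ℝ) (hΦ : ‖Φ‖ ≤ 1) (f g : X →L[ℝ] ℝ) {ε : ℝ} (hε : 0 < ε) :
    ∃ x : X, ‖x‖ ≤ 1 ∧ |f x - Φ f| < ε ∧ |g x - Φ g| < ε := by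
  set s : Set (ℝ × ℝ) := closure ((f.prod g) '' closedBall (0:X) 1) with hs
  have hconv : Convex ℝ s :=
    (((convex_closedBall (0:X) 1).linear_image (f.prod g).toLinearMap)).closure
  have hmem : (Φ f, Φ g) ∈ s := by
    by_contra hnot
    obtain ⟨φ, u, hu, hxu⟩ := geometric_hahn_banach_closed_point hconv isClosed_closure hnot
    set L : X →L[ℝ] ℝ := φ.comp (f.prod g) with hL
    have hball : ∀ z : X, ‖z‖ ≤ 1 → L z < u := by
      intro z hz
      exact hu _ (subset_closure ⟨z, by simpa using hz, rfl⟩)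
    have hu0 : 0 ≤ u := by
      have := hball 0 (by simp)
      simpa using this.le
    have hLnorm : ‖L‖ ≤ u := by
      refine L.opNorm_le_bound hu0 fun x => ?_
      rcases eq_or_ne x 0 with rfl | hx
      · simp
      · have hnx : 0 < ‖x‖ := norm_pos_iff.2 hx
        set z := ‖x‖⁻¹ • x with hz
        have hznorm : ‖z‖ ≤ 1 := by
          rw [hz, norm_smul, norm_inv, norm_norm, inv_mul_cancel₀ hnx.ne']
        have h1 : L z < u := hball z hznorm
        have h2 : L (-z) < u := hball (-z) (by simpa using hznorm)
        have habs : |L z| ≤ u := abs_le.2 ⟨neg_le.1 (by simpa using h2.le), h1.le⟩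
        have : L z = ‖x‖⁻¹ * L x := by rw [hz, map_smul]; rfl
        rw [this] at habs
        rw [abs_mul, abs_inv, abs_norm] at habs
        calc |L x| = ‖x‖ * (‖x‖⁻¹ * |L x|) := by field_simp
          _ ≤ ‖x‖ * u := by nlinarith [hnx.le]
          _ = u * ‖x‖ := mul_comm _ _
    -- express L as a combination
    have hLeq : L = φ (1,0) • f + φ (0,1) • g := by
      ext x
      have : (f x, g x) = (f x) • ((1:ℝ),(0:ℝ)) + (g x) • ((0:ℝ),(1:ℝ)) := by
        simp [Prod.ext_iff]
      simp only [hL, ContinuousLinearMap.comp_apply, ContinuousLinearMap.prod_apply, this,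
        map_add, map_smul]
      simp [smul_eq_mul]; ring
    have hval : φ (Φ f, Φ g) = Φ L := by
      have : ((Φ f, Φ g) : ℝ × ℝ) = (Φ f) • ((1:ℝ),(0:ℝ)) + (Φ g) • ((0:ℝ),(1:ℝ)) := by
        simp [Prod.ext_iff]
      rw [this, map_add, map_smul, map_smul, hLeq, map_add, map_smul, map_smul]
      simp [smul_eq_mul]; ring
    have hΦL : Φ L ≤ u := by
      calc Φ L ≤ |Φ L| := le_abs_self _
        _ ≤ ‖Φ‖ * ‖L‖ := Φ.le_opNorm L
        _ ≤ 1 * u := mul_le_mul hΦ hLnorm (norm_nonneg _) zero_le_one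
        _ = u := one_mul u
    rw [hval] at hxu
    exact absurd hΦL (not_le.2 hxu)
  rw [Metric.mem_closure_iff] at hmem
  obtain ⟨p, hp, hdist⟩ := hmem ε hε
  obtain ⟨x, hx, rfl⟩ := hp
  refine ⟨x, by simpa using hx, ?_, ?_⟩
  · have hle : dist (f x) (Φ f) ≤ dist ((f.prod g) x) (Φ f, Φ g) := by
      rw [Prod.dist_eq]; exact le_max_left _ _
    have := hle.trans_lt (by rwa [dist_comm])
    simpa [Real.dist_eq] using this
  · have hle : dist (g x) (Φ g) ≤ dist ((f.prod g) x) (Φ f, Φ g) := by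
      rw [Prod.dist_eq]; exact le_max_right _ _
    have := hle.trans_lt (by rwa [dist_comm])
    simpa [Real.dist_eq] using this

theorem stmt14 {X Y : Type*} [NormedAddCommGroup X] [NormedSpace ℝ X] [CompleteSpace X]
    [NormedAddCommGroup Y] [NormedSpace ℝ Y] [CompleteSpace Y]
    (G : X →L[ℝ] Y) (hG : ‖G‖ = 1) (r : ℝ) (hr : r ∈ Set.Ioc (0:ℝ) 1)
    (h : ∀ δ > (0:ℝ),
      Metric.closedBall (0 : (X →L[ℝ] ℝ) →L[ℝ] ℝ) r ⊆
        closure (convexHull ℝ {Φ : (X →L[ℝ] ℝ) →L[ℝ] ℝ | ‖Φ‖ ≤ 1 ∧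
          1 - δ < ‖((ContinuousLinearMap.compL ℝ (Y →L[ℝ] ℝ) (X →L[ℝ] ℝ) ℝ).flip
              ((ContinuousLinearMap.compL ℝ X Y ℝ).flip G)) Φ‖})) :
    ∀ δ > (0:ℝ),
      Metric.closedBall (0:X) r ⊆
        closure (convexHull ℝ {x : X | ‖x‖ ≤ 1 ∧ 1 - δ < ‖G x‖}) := by
  intro δ hδ x hx
  by_contra hnot
  set S : Set X := {x : X | ‖x‖ ≤ 1 ∧ 1 - δ < ‖G x‖} with hS
  have hCconv : Convex ℝ (closure (convexHull ℝ S)) := (convex_convexHull ℝ S).closure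
  obtain ⟨f, u, hu, hxu⟩ := geometric_hahn_banach_closed_point hCconv isClosed_closure hnot
  -- ι x is in the bidual ball of radius r
  set ι := NormedSpace.inclusionInDoubleDualLi ℝ (E := X) with hι
  have hΦ₀ : (ι x : (X →L[ℝ] ℝ) →L[ℝ] ℝ) ∈ Metric.closedBall (0 : (X →L[ℝ] ℝ) →L[ℝ] ℝ) r := by
    rw [Metric.mem_closedBall]
    change dist (ι x) (0 : StrongDual ℝ (StrongDual ℝ X)) ≤ r
    refine (dist_zero_right (ι x)).trans_le ?_
    rw [ι.norm_map]
    simpa using hx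
  have hmem := h (δ/2) (by linarith) hΦ₀
  -- ε
  set ε : ℝ := min (δ/2) ((f x - u)/2) with hε
  have hεpos : 0 < ε := lt_min (by linarith) (by linarith)
  -- Every Ψ in the bidual slice set has E_f Ψ ≤ u + ε
  set T : Set ((X →L[ℝ] ℝ) →L[ℝ] ℝ) := {Φ : (X →L[ℝ] ℝ) →L[ℝ] ℝ | ‖Φ‖ ≤ 1 ∧
          1 - δ/2 < ‖((ContinuousLinearMap.compL ℝ (Y →L[ℝ] ℝ) (X →L[ℝ] ℝ) ℝ).flip
              ((ContinuousLinearMap.compL ℝ X Y ℝ).flip G)) Φ‖} with hT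
  have hTbound : ∀ Ψ ∈ T, Ψ f ≤ u + ε := by
    rintro Ψ ⟨hΨ1, hΨ2⟩
    obtain ⟨y, hy1, hy2⟩ := ContinuousLinearMap.exists_lt_apply_of_lt_opNorm _ hΨ2
    -- the value at y is Ψ (y ∘ G)
    have hval : (((ContinuousLinearMap.compL ℝ (Y →L[ℝ] ℝ) (X →L[ℝ] ℝ) ℝ).flip
              ((ContinuousLinearMap.compL ℝ X Y ℝ).flip G)) Ψ) y = Ψ (y.comp G) := rfl
    rw [hval, Real.norm_eq_abs] at hy2
    obtain ⟨z, hz1, hz2, hz3⟩ := goldstine2 Ψ hΨ1 f (y.comp G) hεpos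
    have hycomp : (y.comp G) z = y (G z) := rfl
    have hGz : 1 - δ < ‖G z‖ := by
      have h1 : |y (G z)| ≤ ‖G z‖ := by
        calc |y (G z)| = ‖y (G z)‖ := rfl
          _ ≤ ‖y‖ * ‖G z‖ := y.le_opNorm _
          _ ≤ 1 * ‖G z‖ := mul_le_mul_of_nonneg_right hy1.le (norm_nonneg _)
          _ = ‖G z‖ := one_mul _
      have h2 : |Ψ (y.comp G)| - ε < |y (G z)| := by
        have h3 : |Ψ (y.comp G)| - |y (G z)| ≤ |Ψ (y.comp G) - y (G z)| :=
          abs_sub_abs_le_abs_sub _ _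
        have h4 : |Ψ (y.comp G) - y (G z)| < ε := by
          have := hz3; rw [abs_sub_comm] at this; exact this
        linarith
      have hεle : ε ≤ δ/2 := min_le_left _ _
      linarith
    have hzS : z ∈ S := ⟨hz1, hGz⟩
    have hfz : f z < u := hu _ (subset_closure (subset_convexHull ℝ S hzS))
    have : Ψ f < f z + ε := by
      have := abs_lt.1 hz2
      linarith
    linarith
  -- the halfspace {Φ | Φ f ≤ u + ε} is closed convex and contains T
  have hhalf : closure (convexHull ℝ T) ⊆ {Φ : (X →L[ℝ] ℝ) →L[ℝ] ℝ | Φ f ≤ u + ε} := by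
    refine closure_minimal (convexHull_min hTbound ?_) ?_
    · have : Convex ℝ (Iic (u + ε)) := convex_Iic _
      exact this.linear_preimage ((ContinuousLinearMap.apply ℝ ℝ f).toLinearMap)
    · exact IsClosed.preimage (ContinuousLinearMap.apply ℝ ℝ f).continuous isClosed_Iic
  have hfinal : (ι x : (X →L[ℝ] ℝ) →L[ℝ] ℝ) f ≤ u + ε := hhalf hmem
  have hιx : (ι x : (X →L[ℝ] ℝ) →L[ℝ] ℝ) f = f x := rfl
  have hεle : ε ≤ (f x - u)/2 := min_le_right _ _
  rw [hιx] at hfinal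
  linarith
end

section
/- Let X be a Banach space. If there exists a subset 𝓑 ⊆ B_{X*} which is a spear set of X* and satisfies sup_{x*∈𝓑} |x*(x)| < 1 for every x ∈ S_X, then there exists a Banach space Y and a norm-one generating operator G : X → Y with ‖Gx‖ < 1 for every x ∈ S_X (so G does not attain its norm). One may take Y = ℓ_∞(𝓑) and (Gx)(x*) = x*(x). -/
open Metric Set

/-- Key consequence of the spear property: for every functional `f` and `ε > 0` there is a
point `y` in the ball and `g ∈ B` with `|g y| > 1 - ε` and `f y > ‖f‖ - ε`. -/
lemma spear_key {X : Type*} [NormedAddCommGroup X] [NormedSpace ℝ X]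
    (B : Set (X →L[ℝ] ℝ)) (hB : B ⊆ Metric.closedBall 0 1)
    (hspear : ∀ f : X →L[ℝ] ℝ,
      sSup {r : ℝ | ∃ θ : ℝ, |θ| = 1 ∧ ∃ g ∈ B, r = ‖g + θ • f‖} = 1 + ‖f‖)
    (f : X →L[ℝ] ℝ) {ε : ℝ} (hε : 0 < ε) :
    ∃ (y : X) (g : X →L[ℝ] ℝ), g ∈ B ∧ ‖y‖ ≤ 1 ∧ 1 - ε < |g y| ∧ ‖f‖ - ε < f y := by
  set S : Set ℝ := {r : ℝ | ∃ θ : ℝ, |θ| = 1 ∧ ∃ g ∈ B, r = ‖g + θ • f‖} with hS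
  have hsp : sSup S = 1 + ‖f‖ := hspear f
  have hne : S.Nonempty := by
    by_contra h
    rw [not_nonempty_iff_eq_empty] at h
    rw [h, Real.sSup_empty] at hsp
    have := norm_nonneg f
    linarith
  obtain ⟨r, hrS, hr⟩ := exists_lt_of_lt_csSup hne
    (show 1 + ‖f‖ - ε < sSup S by rw [hsp]; linarith)
  obtain ⟨θ, hθ, g, hg, rfl⟩ := hrS
  obtain ⟨x, hx1, hx2⟩ := (g + θ • f).exists_lt_apply_of_lt_opNorm hr
  have hgle : ‖g‖ ≤ 1 := by simpa [Metric.mem_closedBall, dist_zero_right] using hB hg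
  -- replace x by ±x so that the value is positive
  have hx2' : |g x + θ * f x| > 1 + ‖f‖ - ε := by
    simpa [Real.norm_eq_abs] using hx2
  obtain ⟨x', hx'1, hx'2⟩ : ∃ x' : X, ‖x'‖ ≤ 1 ∧ 1 + ‖f‖ - ε < g x' + θ * f x' := by
    rcases le_or_gt 0 (g x + θ * f x) with h | h
    · exact ⟨x, hx1.le, by rwa [abs_of_nonneg h] at hx2'⟩
    · refine ⟨-x, by simpa using hx1.le, ?_⟩
      rw [abs_of_neg h] at hx2'
      simp only [map_neg, mul_neg]
      linarith
  have hgb : |g x'| ≤ 1 := by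
    calc |g x'| ≤ ‖g‖ * ‖x'‖ := g.le_opNorm x'
    _ ≤ 1 := by
      have := norm_nonneg x'
      nlinarith
  have hfb : |θ * f x'| ≤ ‖f‖ := by
    rw [abs_mul, hθ, one_mul]
    calc |f x'| ≤ ‖f‖ * ‖x'‖ := f.le_opNorm x'
    _ ≤ ‖f‖ := by
      have := norm_nonneg f
      nlinarith
  have h1 : 1 - ε < g x' := by
    have := le_abs_self (θ * f x')
    linarith
  have h2 : ‖f‖ - ε < θ * f x' := by
    have := (abs_le.mp hgb).2
    linarith
  refine ⟨θ • x', g, hg, ?_, ?_, ?_⟩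
  · rw [norm_smul, Real.norm_eq_abs, hθ, one_mul]; exact hx'1
  · rw [map_smul, smul_eq_mul, abs_mul, hθ, one_mul]
    have := le_abs_self (g x')
    linarith
  · rw [map_smul, smul_eq_mul]; exact h2

theorem stmt17 {X : Type*} [NormedAddCommGroup X] [NormedSpace ℝ X] [CompleteSpace X]
    (B : Set (X →L[ℝ] ℝ)) (hB : B ⊆ Metric.closedBall 0 1)
    (hspear : ∀ f : X →L[ℝ] ℝ,
      sSup {r : ℝ | ∃ θ : ℝ, |θ| = 1 ∧ ∃ g ∈ B, r = ‖g + θ • f‖} = 1 + ‖f‖)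
    (hsup : ∀ x : X, ‖x‖ = 1 → sSup ((fun g : X →L[ℝ] ℝ => |g x|) '' B) < 1) :
    ∃ G : X →L[ℝ] lp (fun _ : B => ℝ) ⊤,
      (∀ (x : X) (g : B), (G x : ∀ _ : B, ℝ) g = (g : X →L[ℝ] ℝ) x) ∧
      ‖G‖ = 1 ∧
      (∀ δ > (0:ℝ),
        closure (convexHull ℝ {x : X | ‖x‖ ≤ 1 ∧ 1 - δ < ‖G x‖}) = Metric.closedBall (0:X) 1) ∧
      ∀ x : X, ‖x‖ = 1 → ‖G x‖ < 1 := by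
  classical
  have hgle : ∀ g ∈ B, ‖g‖ ≤ 1 := fun g hg => by
    simpa [Metric.mem_closedBall, dist_zero_right] using hB hg
  have hmem : ∀ x : X, Memℓp (fun g : B => (g : X →L[ℝ] ℝ) x) ⊤ := by
    intro x
    apply memℓp_infty
    refine ⟨‖x‖, ?_⟩
    rintro r ⟨g, rfl⟩
    calc ‖(g : X →L[ℝ] ℝ) x‖ ≤ ‖(g : X →L[ℝ] ℝ)‖ * ‖x‖ := (g : X →L[ℝ] ℝ).le_opNorm x
    _ ≤ 1 * ‖x‖ := by
      have := norm_nonneg x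
      nlinarith [hgle g g.2]
    _ = ‖x‖ := one_mul _
  let F : X →ₗ[ℝ] lp (fun _ : B => ℝ) ⊤ :=
    { toFun := fun x => ⟨fun g => (g : X →L[ℝ] ℝ) x, hmem x⟩
      map_add' := fun x y => by ext g; simp; rfl
      map_smul' := fun c x => by ext g; simp }
  have hFbound : ∀ x : X, ‖F x‖ ≤ 1 * ‖x‖ := by
    intro x
    apply lp.norm_le_of_forall_le (by positivity)
    intro g
    calc ‖(g : X →L[ℝ] ℝ) x‖ ≤ ‖(g : X →L[ℝ] ℝ)‖ * ‖x‖ := (g : X →L[ℝ] ℝ).le_opNorm x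
    _ ≤ 1 * ‖x‖ := by
      have := norm_nonneg x
      nlinarith [hgle g g.2]
  let G : X →L[ℝ] lp (fun _ : B => ℝ) ⊤ := F.mkContinuous 1 hFbound
  have happ : ∀ (x : X) (g : B), (G x : ∀ _ : B, ℝ) g = (g : X →L[ℝ] ℝ) x := fun _ _ => rfl
  have happle : ∀ (x : X) (g : B), |(g : X →L[ℝ] ℝ) x| ≤ ‖G x‖ := by
    intro x g
    have := lp.norm_apply_le_norm (by norm_num : (⊤ : ENNReal) ≠ 0) (G x) g
    rwa [happ, Real.norm_eq_abs] at this
  have hGx : ∀ x : X, ‖G x‖ ≤ ‖x‖ := fun x => by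
    have h := hFbound x
    rw [one_mul] at h
    exact h
  have hGnorm : ‖G‖ = 1 := by
    refine le_antisymm (F.mkContinuous_norm_le zero_le_one hFbound) ?_
    by_contra h
    push_neg at h
    obtain ⟨y, g, hg, hy1, hy2, _⟩ := spear_key B hB hspear 0 (show 0 < 1 - ‖G‖ by linarith)
    have h1 : |g y| ≤ ‖G y‖ := happle y ⟨g, hg⟩
    have h2 : ‖G y‖ ≤ ‖G‖ * ‖y‖ := G.le_opNorm y
    have h3 : ‖G‖ * ‖y‖ ≤ ‖G‖ := by
      have := (norm_nonneg G)
      nlinarith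
    linarith
  refine ⟨G, happ, hGnorm, ?_, ?_⟩
  · -- generating property
    intro δ hδ
    set D : Set X := {x : X | ‖x‖ ≤ 1 ∧ 1 - δ < ‖G x‖} with hD
    apply Subset.antisymm
    · apply closure_minimal _ Metric.isClosed_closedBall
      apply convexHull_min _ (convex_closedBall 0 1)
      intro x hx
      rw [Metric.mem_closedBall, dist_zero_right]
      exact hx.1
    · intro x₀ hx₀
      by_contra hc
      obtain ⟨f, u, hfu, hux⟩ := geometric_hahn_banach_closed_point
        ((convex_convexHull ℝ D).closure) isClosed_closure hc
      have hx₀1 : ‖x₀‖ ≤ 1 := by rwa [Metric.mem_closedBall, dist_zero_right] at hx₀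
      have hu : u < ‖f‖ := by
        have h1 : f x₀ ≤ |f x₀| := le_abs_self _
        have h2 : |f x₀| ≤ ‖f‖ * ‖x₀‖ := f.le_opNorm x₀
        have h3 : ‖f‖ * ‖x₀‖ ≤ ‖f‖ := by
          have := norm_nonneg f
          nlinarith
        linarith
      set ε : ℝ := min δ (‖f‖ - u) with hε
      have hε0 : 0 < ε := lt_min hδ (by linarith)
      obtain ⟨y, g, hg, hy1, hy2, hy3⟩ := spear_key B hB hspear f hε0
      have hyD : y ∈ D := by
        refine ⟨hy1, ?_⟩
        have h1 : |g y| ≤ ‖G y‖ := happle y ⟨g, hg⟩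
        have h2 : ε ≤ δ := min_le_left _ _
        linarith
      have hyC : y ∈ closure (convexHull ℝ D) :=
        subset_closure (subset_convexHull ℝ D hyD)
      have h4 : f y < u := hfu y hyC
      have h5 : ε ≤ ‖f‖ - u := min_le_right _ _
      linarith
  · -- norm not attained
    intro x hx
    have hnorm : ‖G x‖ = sSup ((fun g : X →L[ℝ] ℝ => |g x|) '' B) := by
      rw [Set.image_eq_range, lp.norm_eq_ciSup, sSup_range]
      exact iSup_congr fun g => Real.norm_eq_abs _
    rw [hnorm]
    exact hsup x hx
end

section
/- Let X, Y be Banach spaces. The set Gen(X,Y) of all generating operators from X to Y is norm-closed in the space of bounded operators L(X,Y). -/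
open Metric Set

theorem stmt18 {X Y : Type*} [NormedAddCommGroup X] [NormedSpace ℝ X] [CompleteSpace X]
    [NormedAddCommGroup Y] [NormedSpace ℝ Y] [CompleteSpace Y] :
    IsClosed {G : X →L[ℝ] Y | ‖G‖ = 1 ∧ ∀ δ > (0:ℝ),
      closure (convexHull ℝ {x : X | ‖x‖ ≤ 1 ∧ 1 - δ < ‖G x‖}) = Metric.closedBall (0:X) 1} := by
  apply IsSeqClosed.isClosed
  intro f G hf hfG
  constructor
  · have h1 : Filter.Tendsto (fun n => ‖f n‖) Filter.atTop (nhds ‖G‖) := hfG.norm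
    have h2 : Filter.Tendsto (fun n => ‖f n‖) Filter.atTop (nhds 1) := by
      simp only [fun n => (hf n).1]
      exact tendsto_const_nhds
    exact (tendsto_nhds_unique h1 h2)
  · intro δ hδ
    obtain ⟨n, hn⟩ : ∃ n, ‖f n - G‖ < δ / 2 := by
      have := (Metric.tendsto_atTop.1 hfG) (δ / 2) (by linarith)
      obtain ⟨N, hN⟩ := this
      exact ⟨N, by simpa [dist_eq_norm] using hN N le_rfl⟩
    apply subset_antisymm
    · refine closure_minimal (convexHull_min ?_ (convex_closedBall _ _)) Metric.isClosed_closedBall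
      intro x hx
      simpa [mem_closedBall_zero_iff] using hx.1
    · have key := (hf n).2 (δ / 2) (by linarith)
      rw [← key]
      refine closure_mono (convexHull_mono ?_)
      intro x hx
      refine ⟨hx.1, ?_⟩
      have h3 : ‖f n x - G x‖ ≤ ‖f n - G‖ * ‖x‖ := (f n - G).le_opNorm x
      have h4 : ‖f n x‖ - ‖G x‖ ≤ ‖f n x - G x‖ := norm_sub_norm_le _ _
      have h5 : ‖f n - G‖ * ‖x‖ ≤ δ / 2 * 1 := by
        apply mul_le_mul hn.le hx.1 (norm_nonneg x) (by linarith)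
      have := hx.2
      linarith
end

section
/- Let (Ω,Σ,μ) be a positive measure space and Y a Banach space. Then the closed unit ball of L_∞(μ,Y) equals the closed convex hull of {g ∈ L_∞(μ,Y) : ‖g(t)‖ = 1 for μ-almost every t}. -/
open Metric Set MeasureTheory

private lemma sum_ite_lt_aux {M : Type*} [AddCommGroup M] [Module ℝ M]
    (n m : ℕ) (hm : m ≤ n) (a : M) :
    ∑ i ∈ Finset.range n, (if i < m then a else -a) = ((2 * m - n : ℝ)) • a := by
  classical
  have hfilt : (Finset.range n).filter (fun i => i < m) = Finset.range m := by
    ext i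
    simp only [Finset.mem_filter, Finset.mem_range]
    omega
  have hcard := Finset.card_filter_add_card_filter_not
    (s := Finset.range n) (p := fun i => i < m)
  rw [hfilt, Finset.card_range, Finset.card_range] at hcard
  rw [Finset.sum_ite, Finset.sum_const, Finset.sum_const, hfilt, Finset.card_range]
  have hc2 : ((Finset.range n).filter (fun i => ¬ i < m)).card = n - m := by omega
  rw [hc2]
  rw [← Nat.cast_smul_eq_nsmul ℝ m a, ← Nat.cast_smul_eq_nsmul ℝ (n - m) (-a)]
  rw [Nat.cast_sub hm]
  rw [smul_neg, ← neg_smul, ← add_smul]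
  congr 1
  ring

private lemma abs_est_aux (n : ℕ) (hn0 : 0 < (n : ℝ)) (r m : ℝ)
    (hfl : m ≤ (n : ℝ) * (1 + r) / 2) (hfu : (n : ℝ) * (1 + r) / 2 < m + 1) :
    |r - (2 * m - (n : ℝ)) / n| ≤ 2 / n := by
  have hrw : r - (2 * m - (n : ℝ)) / n = ((n : ℝ) * r - (2 * m - n)) / n := by
    rw [eq_div_iff hn0.ne', sub_mul, div_mul_cancel₀ _ hn0.ne']
    ring
  rw [hrw, abs_div, abs_of_pos hn0, div_le_div_iff₀ hn0 hn0]
  have habs : |(n : ℝ) * r - (2 * m - n)| ≤ 2 := by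
    rw [abs_le]
    constructor <;> nlinarith
  nlinarith

set_option maxHeartbeats 1000000 in
theorem stmt19 {α Y : Type*} [MeasurableSpace α] (μ : Measure α)
    [NormedAddCommGroup Y] [NormedSpace ℝ Y] [CompleteSpace Y] [Nontrivial Y] :
    Metric.closedBall (0 : Lp Y ⊤ μ) 1 =
      closure (convexHull ℝ {g : Lp Y ⊤ μ | ∀ᵐ t ∂μ, ‖(g : α → Y) t‖ = 1}) := by
  classical
  set S : Set (Lp Y ⊤ μ) := {g : Lp Y ⊤ μ | ∀ᵐ t ∂μ, ‖(g : α → Y) t‖ = 1} with hSdef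
  -- Easy inclusion: S ⊆ closed ball, hence so is the closed convex hull.
  have hSsub : S ⊆ Metric.closedBall (0 : Lp Y ⊤ μ) 1 := by
    intro g hg
    rw [hSdef, Set.mem_setOf_eq] at hg
    rw [mem_closedBall, dist_zero_right, Lp.norm_def]
    have h1 : eLpNorm (g : α → Y) ⊤ μ ≤ ENNReal.ofReal 1 := by
      rw [eLpNorm_exponent_top]
      exact eLpNormEssSup_le_of_ae_bound (hg.mono fun t ht => ht.le)
    exact ENNReal.toReal_le_of_le_ofReal one_pos.le h1
  refine Set.Subset.antisymm ?_
    (closure_minimal (convexHull_min hSsub (convex_closedBall _ _)) Metric.isClosed_closedBall)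
  -- Hard inclusion.
  intro f hf
  rw [mem_closedBall, dist_zero_right] at hf
  rw [Metric.mem_closure_iff]
  intro ε hε
  -- a unit vector
  obtain ⟨y, hy⟩ := exists_ne (0 : Y)
  have hyn : ‖y‖ ≠ 0 := norm_ne_zero_iff.mpr hy
  set e : Y := ‖y‖⁻¹ • y with hedef
  have he : ‖e‖ = 1 := by
    rw [hedef, norm_smul, Real.norm_eq_abs, abs_inv, abs_norm]
    exact inv_mul_cancel₀ hyn
  -- choose n
  obtain ⟨n, hngt⟩ := exists_nat_gt (2 / ε)
  have hn0 : 0 < (n : ℝ) := lt_of_le_of_lt (by positivity) hngt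
  have hnn : n ≠ 0 := by exact_mod_cast hn0.ne'
  have h2n : 2 / (n : ℝ) < ε := by
    rw [div_lt_iff₀ hn0]
    rw [div_lt_iff₀ hε] at hngt
    linarith [hngt]
  -- strongly measurable representative
  set f' : α → Y := (Lp.aestronglyMeasurable f).mk _ with hf'def
  have hf'm : StronglyMeasurable f' := (Lp.aestronglyMeasurable f).stronglyMeasurable_mk
  have hff' : (f : α → Y) =ᵐ[μ] f' := (Lp.aestronglyMeasurable f).ae_eq_mk
  -- a.e. bound ‖f' t‖ ≤ 1
  have hftop : eLpNormEssSup (f : α → Y) μ ≤ 1 := by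
    have h1 : eLpNorm (f : α → Y) ⊤ μ ≤ 1 := by
      rw [← ENNReal.toReal_le_toReal (Lp.eLpNorm_ne_top f) ENNReal.one_ne_top]
      simpa [ENNReal.toReal_one] using (Lp.norm_def f ▸ hf)
    rwa [eLpNorm_exponent_top] at h1
  have hf1 : ∀ᵐ t ∂μ, ‖f' t‖ ≤ 1 := by
    have hle0 : ∀ᵐ t ∂μ, (‖(f : α → Y) t‖₊ : ENNReal) ≤ eLpNormEssSup (f : α → Y) μ :=
      ae_le_eLpNormEssSup
    filter_upwards [hff', hle0] with t ht hle
    rw [← ht]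
    have : (‖(f : α → Y) t‖₊ : ENNReal) ≤ 1 := hle.trans hftop
    exact_mod_cast ENNReal.coe_le_one_iff.mp this
  -- the direction function
  set u : α → Y := fun t => if f' t = 0 then e else ‖f' t‖⁻¹ • f' t with hudef
  have hu_sm : StronglyMeasurable u := by
    refine StronglyMeasurable.ite ?_ stronglyMeasurable_const ?_
    · exact hf'm.measurableSet_eq_fun stronglyMeasurable_const
    · exact ((hf'm.norm.measurable.inv).stronglyMeasurable).smul hf'm
  have hu_norm : ∀ t, ‖u t‖ = 1 := by
    intro t
    by_cases h : f' t = 0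
    · simp [hudef, h, he]
    · have hn : ‖f' t‖ ≠ 0 := norm_ne_zero_iff.mpr h
      simp only [hudef, h, if_false, norm_smul, Real.norm_eq_abs, abs_inv, abs_norm]
      exact inv_mul_cancel₀ hn
  have hfu : ∀ t, f' t = ‖f' t‖ • u t := by
    intro t
    by_cases h : f' t = 0
    · simp [hudef, h]
    · have hn : ‖f' t‖ ≠ 0 := norm_ne_zero_iff.mpr h
      simp only [hudef, h, if_false]
      rw [smul_smul, mul_inv_cancel₀ hn, one_smul]
  -- the level function
  set x : α → ℝ := fun t => (n : ℝ) * (1 + ‖f' t‖) / 2 with hxdef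
  have hx_meas : Measurable x := by
    have : Measurable fun t => ‖f' t‖ := hf'm.norm.measurable
    fun_prop
  have hx_nonneg : ∀ t, 0 ≤ x t := fun t => by
    have := norm_nonneg (f' t); positivity
  set k : α → ℕ := fun t => ⌊x t⌋₊ with hkdef
  -- the approximating unit-norm functions
  set g : ℕ → α → Y := fun i t => if i < k t then u t else -u t with hgdef
  have hg_sm : ∀ i, StronglyMeasurable (g i) := by
    intro i
    refine StronglyMeasurable.ite ?_ hu_sm hu_sm.neg
    have hset : {t | i < k t} = {t | ((i : ℝ) + 1) ≤ x t} := by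
      ext t
      simp only [Set.mem_setOf_eq, hkdef]
      rw [Nat.lt_iff_add_one_le, Nat.le_floor_iff (hx_nonneg t)]
      push_cast
      rfl
    rw [hset]
    exact measurableSet_le measurable_const hx_meas
  have hg_norm : ∀ i t, ‖g i t‖ = 1 := by
    intro i t
    by_cases h : i < k t <;> simp [hgdef, h, hu_norm t]
  have hgmem : ∀ i, MemLp (g i) ⊤ μ :=
    fun i => memLp_top_of_bound (hg_sm i).aestronglyMeasurable 1
      (Filter.Eventually.of_forall fun t => (hg_norm i t).le)
  set G : ℕ → Lp Y ⊤ μ := fun i => (hgmem i).toLp (g i) with hGdef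
  have hGS : ∀ i, G i ∈ S := by
    intro i
    rw [hSdef, Set.mem_setOf_eq]
    filter_upwards [(hgmem i).coeFn_toLp] with t ht
    have ht' : (G i : α → Y) t = g i t := ht
    rw [ht']
    exact hg_norm i t
  -- the convex combination
  set h : Lp Y ⊤ μ := ∑ i ∈ Finset.range n, (n : ℝ)⁻¹ • G i with hhdef
  have hh_mem : h ∈ convexHull ℝ S := by
    refine (convex_convexHull ℝ S).sum_mem (fun i _ => by positivity) ?_
      (fun i _ => subset_convexHull ℝ S (hGS i))
    rw [Finset.sum_const, Finset.card_range, nsmul_eq_mul]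
    exact mul_inv_cancel₀ hn0.ne'
  refine ⟨h, hh_mem, ?_⟩
  -- coeFn of h
  have hcoe : ∀ (s : Finset ℕ),
      ((∑ i ∈ s, (n : ℝ)⁻¹ • G i : Lp Y ⊤ μ) : α → Y)
        =ᵐ[μ] fun t => ∑ i ∈ s, (n : ℝ)⁻¹ • g i t := by
    intro s
    induction s using Finset.induction_on with
    | empty => simpa [Pi.zero_def] using Lp.coeFn_zero Y ⊤ μ
    | insert a s' hnot ih =>
      rw [Finset.sum_insert hnot]
      filter_upwards [Lp.coeFn_add ((n : ℝ)⁻¹ • G a) (∑ i ∈ s', (n : ℝ)⁻¹ • G i),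
        Lp.coeFn_smul ((n : ℝ)⁻¹ : ℝ) (G a), (hgmem a).coeFn_toLp, ih] with t h1 h2 h3 h4
      rw [Finset.sum_insert hnot]
      have h3' : (G a : α → Y) t = g a t := h3
      simp only [h1, Pi.add_apply, h2, Pi.smul_apply, h4, h3']
  -- pointwise estimate
  have hch : (h : α → Y) =ᵐ[μ] fun t => ∑ i ∈ Finset.range n, (n : ℝ)⁻¹ • g i t :=
    hcoe (Finset.range n)
  have hbound : ∀ᵐ t ∂μ, ‖(f : α → Y) t - (h : α → Y) t‖ ≤ 2 / (n : ℝ) := by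
    filter_upwards [hff', hf1, hch] with t ht h1 hc
    have hkn : k t ≤ n := by
      have hxle : x t ≤ (n : ℝ) := by
        rw [hxdef]
        have := norm_nonneg (f' t)
        nlinarith [h1]
      calc k t = ⌊x t⌋₊ := rfl
        _ ≤ ⌊(n : ℝ)⌋₊ := Nat.floor_le_floor hxle
        _ = n := Nat.floor_natCast n
    have hsum : (h : α → Y) t = ((2 * (k t : ℝ) - n) / n) • u t := by
      rw [hc]
      rw [show (∑ i ∈ Finset.range n, (n : ℝ)⁻¹ • g i t)
          = (n : ℝ)⁻¹ • ∑ i ∈ Finset.range n, g i t from (Finset.smul_sum).symm]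
      have : ∑ i ∈ Finset.range n, g i t
          = ((2 * (k t : ℝ) - n)) • u t := by
        simpa [hgdef] using sum_ite_lt_aux n (k t) hkn (u t)
      rw [this, smul_smul, div_eq_inv_mul]
    rw [ht, hsum, hfu t, ← sub_smul, norm_smul, Real.norm_eq_abs, hu_norm t, mul_one]
    -- floor bounds
    have hfl : (k t : ℝ) ≤ x t := Nat.floor_le (hx_nonneg t)
    have hfu2 : x t < (k t : ℝ) + 1 := Nat.lt_floor_add_one (x t)
    simp only [hxdef] at hfl hfu2
    exact abs_est_aux n hn0 ‖f' t‖ (k t : ℝ) hfl hfu2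
  -- conclude
  have hdist : dist f h ≤ 2 / (n : ℝ) := by
    rw [dist_eq_norm, Lp.norm_def, eLpNorm_exponent_top]
    refine ENNReal.toReal_le_of_le_ofReal (by positivity) ?_
    refine eLpNormEssSup_le_of_ae_bound ?_
    filter_upwards [Lp.coeFn_sub f h, hbound] with t h1 h2
    rw [h1]
    exact h2
  exact lt_of_le_of_lt hdist h2n
end
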